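/- arXiv:2603.03048 — 4 statements merged into one kernel-verified Lean document; each statement's English description precedes it below -/
import Mathlib

section
/- For the same choice of sign ± throughout, the γ-deformed monopole operators satisfy, for all i, j ∈ {1,…,N} and all α, β ∈ {0,…,ℓ−1}: {u_i^{α±}, u_j^{β±}} = ±(1 − δ_{ij}δ^{αβ}) κ^{αβ} u_i^{α±} u_j^{β±} · C^{αβ}_{ij}, where C^{αβ}_{ij} = 1/(q_i^ℓ − q_j^{ℓ−1}) if (α,β) = (0, ℓ−1), C^{αβ}_{ij} = 1/(q_i^{ℓ−1} − q_j^ℓ) if (α,β) = (ℓ−1, 0), and C^{αβ}_{ij} = 1/(q_i^α − q_j^β) otherwise. -/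
open Real Finset Matrix Kronecker

namespace SpinRS

/-- Phase space: `q`-coordinates and `p`-coordinates indexed by (particle, node). -/
abbrev M (N : ℕ) : Type := ((Fin N × ℕ) → ℝ) × ((Fin N × ℕ) → ℝ)

/-- Extended position coordinate `q_i^α`, satisfying `q_i^{α+ℓ} = q_i^α - γ`. -/
noncomputable def q (N ℓ : ℕ) (γ : ℝ) (i : Fin N) (α : ℤ) (x : M N) : ℝ :=
  x.1 (i, (α % (ℓ : ℤ)).toNat) - γ * ((α / (ℓ : ℤ) : ℤ) : ℝ)

/-- Extended momentum coordinate `p_i^α`, satisfying `p_i^{α+ℓ} = p_i^α`. -/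
def p (N ℓ : ℕ) (i : Fin N) (α : ℤ) (x : M N) : ℝ :=
  x.2 (i, (α % (ℓ : ℤ)).toNat)

/-- Partial derivative with respect to the coordinate `q_i^a`, `0 ≤ a < ℓ`. -/
noncomputable def pdq (N : ℕ) (i : Fin N) (a : ℕ) (f : M N → ℝ) (x : M N) : ℝ :=
  deriv (fun s : ℝ => f (Function.update x.1 (i, a) s, x.2)) (x.1 (i, a))

/-- Partial derivative with respect to the coordinate `p_i^a`, `0 ≤ a < ℓ`. -/
noncomputable def pdp (N : ℕ) (i : Fin N) (a : ℕ) (f : M N → ℝ) (x : M N) : ℝ :=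
  deriv (fun s : ℝ => f (x.1, Function.update x.2 (i, a) s)) (x.2 (i, a))

/-- The Poisson bracket `{f, g}`. -/
noncomputable def Pb (N ℓ : ℕ) (f g : M N → ℝ) (x : M N) : ℝ :=
  ∑ i : Fin N, ∑ a ∈ Finset.range ℓ,
    (pdq N i a f x * pdp N i a g x - pdp N i a f x * pdq N i a g x)

/-- The open set `U` where the extended coordinates are pairwise distinct. -/
def U (N ℓ : ℕ) (γ : ℝ) : Set (M N) :=
  {x | ∀ (i j : Fin N) (α β : ℤ), 0 ≤ α → α ≤ ℓ → 0 ≤ β → β ≤ ℓ →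
    (i, α) ≠ (j, β) → q N ℓ γ i α x ≠ q N ℓ γ j β x}

/-- The gauge polynomial `χ^α(z)`. -/
noncomputable def chi (N ℓ : ℕ) (γ : ℝ) (α : ℤ) (z : ℝ) (x : M N) : ℝ :=
  ∏ i : Fin N, (z - q N ℓ γ i α x)

/-- The γ-deformed monopole operator `u_i^{α,s}` (`s = 1` for `+`, `s = -1` for `-`). -/
noncomputable def u (N ℓ : ℕ) (γ : ℝ) (s : ℤ) (i : Fin N) (α : ℤ) (x : M N) : ℝ :=
  Real.exp ((s : ℝ) * p N ℓ i α x) * chi N ℓ γ (α + s) (q N ℓ γ i α x) x /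
    ∏ j ∈ Finset.univ.erase i, (q N ℓ γ i α x - q N ℓ γ j α x)

/-- Kronecker delta modulo `ℓ`. -/
def dmod (ℓ : ℕ) (α β : ℤ) : ℝ := if α % (ℓ : ℤ) = β % (ℓ : ℤ) then 1 else 0

/-- The Cartan matrix `κ^{αβ}` of the necklace quiver. -/
def kappa (ℓ : ℕ) (α β : ℤ) : ℝ :=
  2 * dmod ℓ α β - dmod ℓ (α + 1) β - dmod ℓ α (β + 1)

/-- One-site `L`-operator `L^{α,s}` as a matrix-valued function. -/
noncomputable def Lmat (N ℓ : ℕ) (γ : ℝ) (s : ℤ) (α : ℤ) (x : M N) :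
    Matrix (Fin N) (Fin N) ℝ :=
  Matrix.of fun i j => u N ℓ γ s j (α + 1) x / (q N ℓ γ j (α + 1) x - q N ℓ γ i α x)

/-- The ordered product `L^{α,s} L^{α+1,s} ⋯ L^{α+n-1,s}`. -/
noncomputable def prodL (N ℓ : ℕ) (γ : ℝ) (s : ℤ) (α : ℤ) (n : ℕ) (x : M N) :
    Matrix (Fin N) (Fin N) ℝ :=
  ((List.range n).map (fun k => Lmat N ℓ γ s (α + (k : ℤ)) x)).prod

/-- The total `L`-operator `L = L^{0,+} L^{1,+} ⋯ L^{ℓ-1,+}`. -/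
noncomputable def Ltot (N ℓ : ℕ) (γ : ℝ) (x : M N) : Matrix (Fin N) (Fin N) ℝ :=
  prodL N ℓ γ 1 0 ℓ x

/-- The Hamiltonians `H[n] = Tr(L^n)`. -/
noncomputable def Ham (N ℓ : ℕ) (γ : ℝ) (n : ℕ) (x : M N) : ℝ :=
  Matrix.trace (Ltot N ℓ γ x ^ n)

/-- The matrix Poisson bracket `{A₁, B₂}` in `End(ℝ^N) ⊗ End(ℝ^N)`. -/
noncomputable def PbMat (N ℓ : ℕ) (A B : M N → Matrix (Fin N) (Fin N) ℝ) (x : M N) :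
    Matrix (Fin N × Fin N) (Fin N × Fin N) ℝ :=
  Matrix.of fun ik jl => Pb N ℓ (fun y => A y ik.1 jl.1) (fun y => B y ik.2 jl.2) x

/-- Matrix unit `e_{ij}`. -/
noncomputable def Eu (N : ℕ) (i j : Fin N) : Matrix (Fin N) (Fin N) ℝ :=
  Matrix.single i j 1

/-- The matrix `r^α`. -/
noncomputable def rmat (N ℓ : ℕ) (γ : ℝ) (α : ℤ) (x : M N) :
    Matrix (Fin N × Fin N) (Fin N × Fin N) ℝ :=
  ∑ i : Fin N, ∑ j ∈ Finset.univ.erase i,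
    (1 / (q N ℓ γ i α x - q N ℓ γ j α x)) •
      ((Eu N i i - Eu N i j) ⊗ₖ (Eu N j j - Eu N j i))

/-- The matrix `r̄^α`. -/
noncomputable def rbar (N ℓ : ℕ) (γ : ℝ) (α : ℤ) (x : M N) :
    Matrix (Fin N × Fin N) (Fin N × Fin N) ℝ :=
  ∑ i : Fin N, ∑ j ∈ Finset.univ.erase i,
    (1 / (q N ℓ γ i α x - q N ℓ γ j α x)) • ((Eu N i i - Eu N i j) ⊗ₖ Eu N j j)

/-- The matrix `r̲^α`. -/
noncomputable def runder (N ℓ : ℕ) (γ : ℝ) (α : ℤ) (x : M N) :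
    Matrix (Fin N × Fin N) (Fin N × Fin N) ℝ :=
  ∑ i : Fin N, ∑ j ∈ Finset.univ.erase i,
    (1 / (q N ℓ γ i α x - q N ℓ γ j α x)) •
      (Eu N i j ⊗ₖ Eu N j i - Eu N i i ⊗ₖ Eu N j j)

/-- Swap of the two tensor factors of `End(ℝ^N) ⊗ End(ℝ^N)`. -/
def swapT (N : ℕ) (R : Matrix (Fin N × Fin N) (Fin N × Fin N) ℝ) :
    Matrix (Fin N × Fin N) (Fin N × Fin N) ℝ :=
  Matrix.of fun ik jl => R (ik.2, ik.1) (jl.2, jl.1)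

/-- The zero mode `E^α = Σ_i u_i^{α,+}`. -/
noncomputable def Egen (N ℓ : ℕ) (γ : ℝ) (α : ℤ) (x : M N) : ℝ :=
  ∑ i : Fin N, u N ℓ γ 1 i α x

/-- The zero mode `F^α = Σ_i u_i^{α,-}`. -/
noncomputable def Fgen (N ℓ : ℕ) (γ : ℝ) (α : ℤ) (x : M N) : ℝ :=
  ∑ i : Fin N, u N ℓ γ (-1) i α x

/-- The Cartan zero mode `H^α = Σ_i (2q_i^α - q_i^{α+1} - q_i^{α-1})`. -/
noncomputable def Hcar (N ℓ : ℕ) (γ : ℝ) (α : ℤ) (x : M N) : ℝ :=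
  ∑ i : Fin N, (2 * q N ℓ γ i α x - q N ℓ γ i (α + 1) x - q N ℓ γ i (α - 1) x)

/-- Generating series `e^α(z)`. -/
noncomputable def egens (N ℓ : ℕ) (γ : ℝ) (α : ℤ) (z : ℝ) (x : M N) : ℝ :=
  ∑ i : Fin N, u N ℓ γ 1 i α x / (z - q N ℓ γ i α x)

/-- Generating series `f^α(z)`. -/
noncomputable def fgens (N ℓ : ℕ) (γ : ℝ) (α : ℤ) (z : ℝ) (x : M N) : ℝ :=
  ∑ i : Fin N, u N ℓ γ (-1) i α x / (z - q N ℓ γ i α x)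

/-- Generating series `h^α(z) = χ^{α+1}(z) χ^{α-1}(z) / χ^α(z)²`. -/
noncomputable def hgens (N ℓ : ℕ) (γ : ℝ) (α : ℤ) (z : ℝ) (x : M N) : ℝ :=
  chi N ℓ γ (α + 1) z x * chi N ℓ γ (α - 1) z x / (chi N ℓ γ α z x) ^ 2

/-- `V^s_{α,β} = u^{α,s} L^{α,s} ⋯ L^{β-1,s} e`. -/
noncomputable def Vgen (N ℓ : ℕ) (γ : ℝ) (s : ℤ) (α β : ℤ) (x : M N) : ℝ :=
  ∑ i : Fin N, ∑ j : Fin N, u N ℓ γ s i α x * prodL N ℓ γ s α (β - α).toNat x i j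

/-- The loop algebra generators `J^{αβ}[n]`, for `α, β ∈ {1,…,ℓ}`, `n : ℤ`. -/
noncomputable def Jgen (N ℓ : ℕ) (γ : ℝ) (α β : ℤ) (n : ℤ) (x : M N) : ℝ :=
  if 0 < n then Vgen N ℓ γ 1 α (β + n * ℓ - 1) x
  else if n < 0 then Vgen N ℓ γ (-1) β (α + (-n) * ℓ - 1) x
  else if β < α then Vgen N ℓ γ (-1) β (α - 1) x
  else if α < β then Vgen N ℓ γ 1 α (β - 1) x
  else ∑ i : Fin N, (q N ℓ γ i α x - q N ℓ γ i (α - 1) x)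

/-- The spin variables `a_i^α = (L^{0,+} ⋯ L^{α-2,+} e)_i`, `α ∈ {1,…,ℓ}`. -/
noncomputable def aspin (N ℓ : ℕ) (γ : ℝ) (α : ℤ) (x : M N) (i : Fin N) : ℝ :=
  ∑ j : Fin N, prodL N ℓ γ 1 0 (α - 1).toNat x i j

/-- The spin variables `c_j^α = (u^{α,+} L^{α,+} ⋯ L^{ℓ-1,+})_j`, `α ∈ {1,…,ℓ}`. -/
noncomputable def cspin (N ℓ : ℕ) (γ : ℝ) (α : ℤ) (x : M N) (j : Fin N) : ℝ :=
  ∑ i : Fin N, u N ℓ γ 1 i α x * prodL N ℓ γ 1 α ((ℓ : ℤ) - α).toNat x i j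


section Helpers

variable {N ℓ : ℕ} {γ : ℝ}

lemma q_shift (hℓ : 0 < ℓ) (i : Fin N) (ν : ℤ) (x : M N) :
    q N ℓ γ i (ν + ℓ) x = q N ℓ γ i ν x - γ := by
  have hℓ' : (ℓ : ℤ) ≠ 0 := by exact_mod_cast hℓ.ne'
  have h1 : (ν + ℓ) % (ℓ : ℤ) = ν % ℓ := by
    simpa using Int.add_mul_emod_self_left (a := ν) (b := (ℓ:ℤ)) (c := 1)
  have h2 : (ν + ℓ) / (ℓ : ℤ) = ν / ℓ + 1 := by
    simpa using Int.add_mul_ediv_right ν 1 hℓ'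
  simp only [q, h1, h2]
  push_cast
  ring

lemma q_in_range (hx0 : (0:ℤ) ≤ ν) (hx1 : ν < ℓ) (i : Fin N) (x : M N) :
    q N ℓ γ i ν x = x.1 (i, ν.toNat) := by
  have h1 : ν % (ℓ : ℤ) = ν := Int.emod_eq_of_lt hx0 (by exact_mod_cast hx1)
  have h2 : ν / (ℓ : ℤ) = 0 := Int.ediv_eq_zero_of_lt hx0 (by exact_mod_cast hx1)
  simp [q, h1, h2]

end Helpers
section Helpers2

variable {N ℓ : ℕ} {γ : ℝ} {x : M N}

lemma qne (hx : x ∈ U N ℓ γ) {i j : Fin N} {α β : ℤ}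
    (hα : 0 ≤ α) (hα' : α ≤ ℓ) (hβ : 0 ≤ β) (hβ' : β ≤ ℓ)
    (h : (i, α) ≠ (j, β)) : q N ℓ γ i α x ≠ q N ℓ γ j β x :=
  hx i j α β hα hα' hβ hβ' h

/-- nonvanishing of the χ-factors `q_i^α - q_m^{α+s}` -/
lemma qne_F (hx : x ∈ U N ℓ γ) (hℓ : 0 < ℓ) {s : ℤ} (hs : s = 1 ∨ s = -1)
    {i : Fin N} {α : ℤ} (hα : 0 ≤ α) (hα' : α < ℓ) (m : Fin N) :
    q N ℓ γ i α x ≠ q N ℓ γ m (α + s) x := by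
  rcases hs with rfl | rfl
  · exact qne hx hα (le_of_lt hα') (by omega) (by omega) (by simp)
  · rcases eq_or_lt_of_le hα with h0 | h0
    · -- α = 0 : shift by ℓ
      have e1 : q N ℓ γ i (α + ℓ) x = q N ℓ γ i α x - γ := q_shift hℓ i α x
      have e2 : q N ℓ γ m (α + -1 + ℓ) x = q N ℓ γ m (α + -1) x - γ := q_shift hℓ m _ x
      have hne : q N ℓ γ i (α + ℓ) x ≠ q N ℓ γ m (α + -1 + ℓ) x := by
        refine qne hx (by omega) (by omega) (by omega) (by omega) (by simp)
      intro h; apply hne; rw [e1, e2, h]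
    · exact qne hx hα (le_of_lt hα') (by omega) (by omega) (by simp)

lemma qne_G (hx : x ∈ U N ℓ γ) {i m : Fin N} {α : ℤ}
    (hα : 0 ≤ α) (hα' : α < ℓ) (h : m ≠ i) :
    q N ℓ γ i α x ≠ q N ℓ γ m α x :=
  qne hx hα (le_of_lt hα') hα (le_of_lt hα') (by simp [Ne.symm h])

end Helpers2
section Helpers3

variable {N ℓ : ℕ} {γ : ℝ} {x : M N}

/-- derivative of an extended coordinate w.r.t. the chart coordinate `(k,a)` -/
noncomputable def eps (ℓ : ℕ) (k : Fin N) (a : ℕ) (m : Fin N) (ν : ℤ) : ℝ :=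
  if (m, (ν % (ℓ:ℤ)).toNat) = (k, a) then 1 else 0

lemma hasDerivAt_qcoord (k : Fin N) (a : ℕ) (m : Fin N) (ν : ℤ) (x : M N) (t : ℝ) :
    HasDerivAt (fun t => q N ℓ γ m ν (Function.update x.1 (k, a) t, x.2))
      (eps ℓ k a m ν) t := by
  simp only [q, eps, Function.update_apply]
  by_cases h : ((m, (ν % (ℓ:ℤ)).toNat) : Fin N × ℕ) = (k, a)
  · simp only [h, if_pos rfl]
    simpa using (hasDerivAt_id t).sub_const (γ * ((ν / (ℓ:ℤ) : ℤ) : ℝ))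
  · simp only [if_neg h]
    exact hasDerivAt_const _ _

lemma pdq_u_gen (hs : s = 1 ∨ s = -1) (i k : Fin N) (a : ℕ) (α : ℤ)
    (hD : ∀ m ∈ Finset.univ.erase i, q N ℓ γ i α x - q N ℓ γ m α x ≠ 0) :
    pdq N k a (u N ℓ γ s i α) x =
      Real.exp ((s:ℝ) * p N ℓ i α x) *
      ((∑ m : Fin N, (∏ m' ∈ Finset.univ.erase m,
            (q N ℓ γ i α x - q N ℓ γ m' (α+s) x)) * (eps ℓ k a i α - eps ℓ k a m (α+s))) *
          (∏ m ∈ Finset.univ.erase i, (q N ℓ γ i α x - q N ℓ γ m α x))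
        - (∏ m : Fin N, (q N ℓ γ i α x - q N ℓ γ m (α+s) x)) *
          (∑ m ∈ Finset.univ.erase i, (∏ m' ∈ (Finset.univ.erase i).erase m,
            (q N ℓ γ i α x - q N ℓ γ m' α x)) * (eps ℓ k a i α - eps ℓ k a m α)))
      / (∏ m ∈ Finset.univ.erase i, (q N ℓ γ i α x - q N ℓ γ m α x))^2 := by
  classical
  set t₀ := x.1 (k, a) with ht₀
  have hself : Function.update x.1 (k, a) t₀ = x.1 := Function.update_eq_self _ _
  have hq : ∀ (m : Fin N) (ν : ℤ),
      HasDerivAt (fun t => q N ℓ γ m ν (Function.update x.1 (k, a) t, x.2))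
        (eps ℓ k a m ν) t₀ := fun m ν => hasDerivAt_qcoord k a m ν x t₀
  have hnum : HasDerivAt
      (fun t => ∏ m : Fin N, (q N ℓ γ i α (Function.update x.1 (k,a) t, x.2)
          - q N ℓ γ m (α+s) (Function.update x.1 (k,a) t, x.2)))
      (∑ m : Fin N, (∏ m' ∈ Finset.univ.erase m,
          (q N ℓ γ i α x - q N ℓ γ m' (α+s) x)) • (eps ℓ k a i α - eps ℓ k a m (α+s))) t₀ := by
    have := HasDerivAt.fun_finsetProd (u := (Finset.univ : Finset (Fin N)))
      (f := fun m t => q N ℓ γ i α (Function.update x.1 (k,a) t, x.2)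
          - q N ℓ γ m (α+s) (Function.update x.1 (k,a) t, x.2))
      (f' := fun m => eps ℓ k a i α - eps ℓ k a m (α+s))
      (fun m _ => (hq i α).sub (hq m (α+s)))
    simpa [hself] using this
  have hden : HasDerivAt
      (fun t => ∏ m ∈ Finset.univ.erase i, (q N ℓ γ i α (Function.update x.1 (k,a) t, x.2)
          - q N ℓ γ m α (Function.update x.1 (k,a) t, x.2)))
      (∑ m ∈ Finset.univ.erase i, (∏ m' ∈ (Finset.univ.erase i).erase m,
          (q N ℓ γ i α x - q N ℓ γ m' α x)) • (eps ℓ k a i α - eps ℓ k a m α)) t₀ := by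
    have := HasDerivAt.fun_finsetProd (u := Finset.univ.erase i)
      (f := fun m t => q N ℓ γ i α (Function.update x.1 (k,a) t, x.2)
          - q N ℓ γ m α (Function.update x.1 (k,a) t, x.2))
      (f' := fun m => eps ℓ k a i α - eps ℓ k a m α)
      (fun m _ => (hq i α).sub (hq m α))
    simpa [hself] using this
  have hD0 : (∏ m ∈ Finset.univ.erase i, (q N ℓ γ i α x - q N ℓ γ m α x)) ≠ 0 :=
    Finset.prod_ne_zero_iff.2 hD
  have hexp : ∀ t : ℝ, Real.exp ((s:ℝ) * p N ℓ i α (Function.update x.1 (k,a) t, x.2))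
      = Real.exp ((s:ℝ) * p N ℓ i α x) := by intro t; rfl
  have H : HasDerivAt (fun t => u N ℓ γ s i α (Function.update x.1 (k,a) t, x.2))
      ((Real.exp ((s:ℝ) * p N ℓ i α x) *
        (∑ m : Fin N, (∏ m' ∈ Finset.univ.erase m,
          (q N ℓ γ i α x - q N ℓ γ m' (α+s) x)) • (eps ℓ k a i α - eps ℓ k a m (α+s))) *
        (∏ m ∈ Finset.univ.erase i, (q N ℓ γ i α x - q N ℓ γ m α x))
        - Real.exp ((s:ℝ) * p N ℓ i α x) *
          (∏ m : Fin N, (q N ℓ γ i α x - q N ℓ γ m (α+s) x)) *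
          (∑ m ∈ Finset.univ.erase i, (∏ m' ∈ (Finset.univ.erase i).erase m,
            (q N ℓ γ i α x - q N ℓ γ m' α x)) • (eps ℓ k a i α - eps ℓ k a m α)))
        / (∏ m ∈ Finset.univ.erase i, (q N ℓ γ i α x - q N ℓ γ m α x))^2) t₀ := by
    have hfun : (fun t => u N ℓ γ s i α (Function.update x.1 (k,a) t, x.2)) =
        fun t => (Real.exp ((s:ℝ) * p N ℓ i α x) *
          ∏ m : Fin N, (q N ℓ γ i α (Function.update x.1 (k,a) t, x.2)
            - q N ℓ γ m (α+s) (Function.update x.1 (k,a) t, x.2))) /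
          ∏ m ∈ Finset.univ.erase i, (q N ℓ γ i α (Function.update x.1 (k,a) t, x.2)
            - q N ℓ γ m α (Function.update x.1 (k,a) t, x.2)) := by
      funext t
      simp only [u, chi, p]
    rw [hfun]
    have hden' : (∏ m ∈ Finset.univ.erase i, (q N ℓ γ i α (Function.update x.1 (k,a) t₀, x.2)
        - q N ℓ γ m α (Function.update x.1 (k,a) t₀, x.2))) ≠ 0 := by
      rw [hself]; exact hD0
    have := (hnum.const_mul (Real.exp ((s:ℝ) * p N ℓ i α x))).fun_div hden hden'
    simpa [hself] using this
  have := H.deriv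
  rw [pdq]
  rw [this]
  simp only [smul_eq_mul]
  ring
end Helpers3
section Helpers4

variable {N ℓ : ℕ} {γ : ℝ} {x : M N} {s : ℤ}

lemma emod_self_of_range {α : ℤ} (hα : 0 ≤ α) (hα' : α < ℓ) : α % (ℓ:ℤ) = α :=
  Int.emod_eq_of_lt hα (by exact_mod_cast hα')

lemma eps_zero {k m : Fin N} {a : ℕ} {ν : ℤ} (h : ((ν % (ℓ:ℤ)).toNat) ≠ a) :
    eps ℓ k a m ν = 0 := by
  simp [eps, Prod.ext_iff, h]

lemma eps_diag {k m : Fin N} {a : ℕ} {ν : ℤ} (h : ((ν % (ℓ:ℤ)).toNat) = a) :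
    eps ℓ k a m ν = if m = k then 1 else 0 := by
  simp [eps, Prod.ext_iff, h]

lemma pdp_u (k : Fin N) (a : ℕ) (i : Fin N) (α : ℤ) :
    pdp N k a (u N ℓ γ s i α) x =
      if ((i, (α % (ℓ:ℤ)).toNat) : Fin N × ℕ) = (k, a) then (s:ℝ) * u N ℓ γ s i α x
      else 0 := by
  classical
  rw [pdp]
  have hfun : (fun t => u N ℓ γ s i α (x.1, Function.update x.2 (k,a) t)) =
      fun t => Real.exp ((s:ℝ) * Function.update x.2 (k,a) t (i, (α % (ℓ:ℤ)).toNat)) *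
        chi N ℓ γ (α+s) (q N ℓ γ i α x) x /
        ∏ m ∈ Finset.univ.erase i, (q N ℓ γ i α x - q N ℓ γ m α x) := by
    funext t; rfl
  rw [hfun]
  by_cases h : ((i, (α % (ℓ:ℤ)).toNat) : Fin N × ℕ) = (k, a)
  · rw [if_pos h]
    have h2 : ∀ t : ℝ, Function.update x.2 (k,a) t (i, (α % (ℓ:ℤ)).toNat) = t := by
      intro t; rw [h]; exact Function.update_self _ _ _
    simp only [h2]
    have hd : HasDerivAt (fun t : ℝ => Real.exp ((s:ℝ) * t) *
        chi N ℓ γ (α+s) (q N ℓ γ i α x) x /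
        ∏ m ∈ Finset.univ.erase i, (q N ℓ γ i α x - q N ℓ γ m α x))
        ((Real.exp ((s:ℝ) * x.2 (k,a)) * (s:ℝ)) * chi N ℓ γ (α+s) (q N ℓ γ i α x) x /
          ∏ m ∈ Finset.univ.erase i, (q N ℓ γ i α x - q N ℓ γ m α x)) (x.2 (k,a)) := by
      simpa using ((((hasDerivAt_id (x.2 (k,a))).const_mul ((s:ℝ))).exp.mul_const
        (chi N ℓ γ (α+s) (q N ℓ γ i α x) x)).div_const _)
    rw [hd.deriv]
    have hp : p N ℓ i α x = x.2 (k, a) := by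
      rw [p]; rw [show ((i, (α % (ℓ:ℤ)).toNat) : Fin N × ℕ) = (k,a) from h]
    rw [u, hp]
    ring
  · rw [if_neg h]
    have h2 : ∀ t : ℝ, Function.update x.2 (k,a) t (i, (α % (ℓ:ℤ)).toNat)
        = x.2 (i, (α % (ℓ:ℤ)).toNat) := by
      intro t; exact Function.update_of_ne h _ _
    simp only [h2]
    exact deriv_const _ _

end Helpers4
section Helpers5

variable {N ℓ : ℕ} {γ : ℝ} {x : M N} {s : ℤ}

lemma hD_ne (hx : x ∈ U N ℓ γ) {i : Fin N} {α : ℤ} (hα : 0 ≤ α) (hα' : α < ℓ) :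
    ∀ m ∈ Finset.univ.erase i, q N ℓ γ i α x - q N ℓ γ m α x ≠ 0 := fun m hm =>
  sub_ne_zero.2 (qne_G hx hα hα' (Finset.mem_erase.1 hm).1)

lemma hD_ne' (hx : x ∈ U N ℓ γ) {i : Fin N} {α : ℤ} (hα : 0 ≤ α) (hα' : α < ℓ) :
    (∏ m ∈ Finset.univ.erase i, (q N ℓ γ i α x - q N ℓ γ m α x)) ≠ 0 :=
  Finset.prod_ne_zero_iff.2 (hD_ne hx hα hα')

lemma pdq_u_zero (hs : s = 1 ∨ s = -1) (hx : x ∈ U N ℓ γ) (i k : Fin N) (a : ℕ) {α : ℤ}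
    (hα : 0 ≤ α) (hα' : α < ℓ)
    (h1 : ((α % (ℓ:ℤ)).toNat) ≠ a) (h2 : (((α + s) % (ℓ:ℤ)).toNat) ≠ a) :
    pdq N k a (u N ℓ γ s i α) x = 0 := by
  rw [pdq_u_gen hs i k a α (hD_ne hx hα hα')]
  simp [eps_zero h1, eps_zero h2]

lemma pdq_u_G (hs : s = 1 ∨ s = -1) (hx : x ∈ U N ℓ γ) (hℓ3 : 3 ≤ ℓ)
    {i j : Fin N} (hij : i ≠ j) {α : ℤ} (hα : 0 ≤ α) (hα' : α < ℓ) :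
    pdq N j (α.toNat) (u N ℓ γ s i α) x =
      u N ℓ γ s i α x / (q N ℓ γ i α x - q N ℓ γ j α x) := by
  classical
  have hmod : (α % (ℓ:ℤ)) = α := emod_self_of_range hα hα'
  have hmodn : ((α % (ℓ:ℤ)).toNat) = α.toNat := by rw [hmod]
  have hsne : (((α + s) % (ℓ:ℤ)).toNat) ≠ α.toNat := by
    rcases hs with rfl | rfl
    · by_cases h : α + 1 < ℓ
      · rw [emod_self_of_range (by omega) h]; omega
      · have : α + 1 = ℓ := by omega
        rw [this, Int.emod_self]; omega
    · by_cases h : 0 ≤ α - 1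
      · rw [show α + -1 = α - 1 by ring, emod_self_of_range h (by omega)]; omega
      · have h0 : α = 0 := by omega
        have : (α + -1) % (ℓ:ℤ) = ℓ - 1 := by
          rw [h0]
          have h1 : ((0:ℤ) + -1) % (ℓ:ℤ) = (-1 + (ℓ:ℤ) * 1) % ℓ := by
            rw [Int.add_mul_emod_self_left]; norm_num
          rw [h1]
          rw [Int.emod_eq_of_lt (by omega) (by omega)]
          ring
        rw [this]; omega
  rw [pdq_u_gen hs i j α.toNat α (hD_ne hx hα hα')]
  have e1 : ∀ m : Fin N, eps ℓ j α.toNat m (α + s) = 0 := fun m => eps_zero hsne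
  have e2 : ∀ m : Fin N, eps ℓ j α.toNat m α = if m = j then 1 else 0 :=
    fun m => eps_diag hmodn
  have e3 : eps ℓ j α.toNat i α = 0 := by rw [e2, if_neg hij]
  rw [Finset.sum_congr rfl (fun m _ => by rw [e1, e3, sub_zero, mul_zero])]
  have hjmem : j ∈ Finset.univ.erase i := Finset.mem_erase.2 ⟨Ne.symm hij, Finset.mem_univ j⟩
  have hsum2 : (∑ m ∈ Finset.univ.erase i, (∏ m' ∈ (Finset.univ.erase i).erase m,
      (q N ℓ γ i α x - q N ℓ γ m' α x)) * (eps ℓ j α.toNat i α - eps ℓ j α.toNat m α)) =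
      -(∏ m' ∈ (Finset.univ.erase i).erase j, (q N ℓ γ i α x - q N ℓ γ m' α x)) := by
    rw [Finset.sum_eq_single_of_mem j hjmem]
    · rw [e3, e2, if_pos rfl]; ring
    · intro b _ hb; rw [e3, e2, if_neg hb]; ring
  rw [hsum2]
  have hprod : (∏ m ∈ Finset.univ.erase i, (q N ℓ γ i α x - q N ℓ γ m α x)) =
      (q N ℓ γ i α x - q N ℓ γ j α x) *
        ∏ m' ∈ (Finset.univ.erase i).erase j, (q N ℓ γ i α x - q N ℓ γ m' α x) :=
    (Finset.mul_prod_erase _ _ hjmem).symm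
  have hGj : q N ℓ γ i α x - q N ℓ γ j α x ≠ 0 := hD_ne hx hα hα' j hjmem
  have hQj : (∏ m' ∈ (Finset.univ.erase i).erase j,
      (q N ℓ γ i α x - q N ℓ γ m' α x)) ≠ 0 :=
    Finset.prod_ne_zero_iff.2 (fun m hm => hD_ne hx hα hα' m (Finset.mem_of_mem_erase hm))
  rw [u, chi]
  rw [hprod]
  field_simp
  simp only [Finset.sum_const_zero, zero_mul, mul_zero]
  ring

lemma pdq_u_F (hs : s = 1 ∨ s = -1) (hx : x ∈ U N ℓ γ) (hℓ3 : 3 ≤ ℓ)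
    (i j : Fin N) {α β : ℤ} (hα : 0 ≤ α) (hα' : α < ℓ) (hβ : 0 ≤ β) (hβ' : β < ℓ)
    (hne : α ≠ β) (hmods : ((α + s) % (ℓ:ℤ)) = β) :
    pdq N j (β.toNat) (u N ℓ γ s i α) x =
      -u N ℓ γ s i α x / (q N ℓ γ i α x - q N ℓ γ j (α + s) x) := by
  classical
  have hℓ0 : 0 < ℓ := by omega
  have hmodn : (((α + s) % (ℓ:ℤ)).toNat) = β.toNat := by rw [hmods]
  have hαβ : ((α % (ℓ:ℤ)).toNat) ≠ β.toNat := by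
    rw [emod_self_of_range hα hα']; omega
  rw [pdq_u_gen hs i j β.toNat α (hD_ne hx hα hα')]
  have e1 : ∀ m : Fin N, eps ℓ j β.toNat m (α + s) = if m = j then 1 else 0 :=
    fun m => eps_diag hmodn
  have e2 : ∀ m : Fin N, eps ℓ j β.toNat m α = 0 := fun m => eps_zero hαβ
  rw [Finset.sum_congr (rfl : Finset.univ.erase i = Finset.univ.erase i)
    (fun m _ => by rw [e2, e2, sub_zero, mul_zero])]
  have hsum1 : (∑ m : Fin N, (∏ m' ∈ Finset.univ.erase m,
      (q N ℓ γ i α x - q N ℓ γ m' (α+s) x)) * (eps ℓ j β.toNat i α - eps ℓ j β.toNat m (α+s))) =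
      -(∏ m' ∈ Finset.univ.erase j, (q N ℓ γ i α x - q N ℓ γ m' (α+s) x)) := by
    rw [Finset.sum_eq_single_of_mem j (Finset.mem_univ j)]
    · rw [e2, e1, if_pos rfl]; ring
    · intro b _ hb; rw [e2, e1, if_neg hb]; ring
  rw [hsum1]
  have hFj : q N ℓ γ i α x - q N ℓ γ j (α+s) x ≠ 0 :=
    sub_ne_zero.2 (qne_F hx hℓ0 hs hα hα' j)
  have hNu : (∏ m : Fin N, (q N ℓ γ i α x - q N ℓ γ m (α+s) x)) =
      (q N ℓ γ i α x - q N ℓ γ j (α+s) x) *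
        ∏ m' ∈ Finset.univ.erase j, (q N ℓ γ i α x - q N ℓ γ m' (α+s) x) :=
    (Finset.mul_prod_erase _ _ (Finset.mem_univ j)).symm
  have hD0 := hD_ne' hx hα hα' (i := i)
  rw [u, chi, hNu]
  field_simp
  simp only [Finset.sum_const_zero, zero_mul, mul_zero]
  ring

end Helpers5
section Helpers6

variable {N ℓ : ℕ} {γ : ℝ} {x : M N} {s : ℤ}

lemma sum_collapse (F : Fin N → ℕ → ℝ) (c : Fin N) (b : ℕ) (hb : b < ℓ) :
    (∑ k : Fin N, ∑ a ∈ Finset.range ℓ, if ((c, b) : Fin N × ℕ) = (k, a) then F k a else 0)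
      = F c b := by
  classical
  rw [Finset.sum_eq_single_of_mem c (Finset.mem_univ c)]
  · rw [Finset.sum_eq_single_of_mem b (Finset.mem_range.2 hb)]
    · simp
    · intro a _ ha; rw [if_neg (by simp [Prod.ext_iff, Ne.symm ha])]
  · intro k _ hk
    exact Finset.sum_eq_zero fun a _ => if_neg (by simp [Prod.ext_iff, Ne.symm hk])

lemma Pb_u {i j : Fin N} {α β : ℤ} (hα : 0 ≤ α) (hα' : α < ℓ) (hβ : 0 ≤ β) (hβ' : β < ℓ) :
    Pb N ℓ (u N ℓ γ s i α) (u N ℓ γ s j β) x =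
      pdq N j β.toNat (u N ℓ γ s i α) x * ((s:ℝ) * u N ℓ γ s j β x)
      - (s:ℝ) * u N ℓ γ s i α x * pdq N i α.toNat (u N ℓ γ s j β) x := by
  classical
  rw [Pb]
  have hmα : ((α % (ℓ:ℤ)).toNat) = α.toNat := by rw [emod_self_of_range hα hα']
  have hmβ : ((β % (ℓ:ℤ)).toNat) = β.toNat := by rw [emod_self_of_range hβ hβ']
  have step : ∀ (k : Fin N) (a : ℕ),
      pdq N k a (u N ℓ γ s i α) x * pdp N k a (u N ℓ γ s j β) x
        - pdp N k a (u N ℓ γ s i α) x * pdq N k a (u N ℓ γ s j β) x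
      = (if ((j, β.toNat) : Fin N × ℕ) = (k, a) then
            pdq N k a (u N ℓ γ s i α) x * ((s:ℝ) * u N ℓ γ s j β x) else 0)
        - (if ((i, α.toNat) : Fin N × ℕ) = (k, a) then
            (s:ℝ) * u N ℓ γ s i α x * pdq N k a (u N ℓ γ s j β) x else 0) := by
    intro k a
    rw [pdp_u, pdp_u, hmα, hmβ]
    by_cases h1 : ((j, β.toNat) : Fin N × ℕ) = (k, a) <;>
      by_cases h2 : ((i, α.toNat) : Fin N × ℕ) = (k, a) <;>
      simp [h1, h2] <;> ring
  rw [Finset.sum_congr rfl fun k _ => Finset.sum_congr rfl fun a _ => step k a]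
  rw [Finset.sum_congr rfl fun k _ => Finset.sum_sub_distrib _ _, Finset.sum_sub_distrib _ _]
  rw [sum_collapse _ j β.toNat (by omega), sum_collapse _ i α.toNat (by omega)]

end Helpers6
section Helpers7

variable {N ℓ : ℕ} {γ : ℝ} {x : M N} {s : ℤ}

lemma emod_succ {α : ℤ} (hα : 0 ≤ α) (hα' : α < ℓ) :
    (α + 1) % (ℓ:ℤ) = if α + 1 = ℓ then 0 else α + 1 := by
  split_ifs with h
  · rw [h, Int.emod_self]
  · exact emod_self_of_range (by omega) (by omega)

lemma emod_pred (hℓ0 : 0 < ℓ) {α : ℤ} (hα : 0 ≤ α) (hα' : α < ℓ) :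
    (α + -1) % (ℓ:ℤ) = if α = 0 then (ℓ:ℤ) - 1 else α - 1 := by
  have key : (α + -1) % (ℓ:ℤ) = (α + -1 + ℓ * 1) % ℓ :=
    (Int.add_mul_emod_self_left _ _ _).symm
  split_ifs with h
  · rw [key, h]
    rw [emod_self_of_range (by omega) (by push_cast; omega)]
    push_cast; ring
  · rw [emod_self_of_range (by omega) (by omega)]; ring

lemma kappa_eval {α β : ℤ} (hα : 0 ≤ α) (hα' : α < ℓ) (hβ : 0 ≤ β) (hβ' : β < ℓ) :
    kappa ℓ α β = (if α = β then 2 else 0) + (if (α + 1) % (ℓ:ℤ) = β then -1 else 0)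
      + (if α = (β + 1) % (ℓ:ℤ) then -1 else 0) := by
  simp only [kappa, dmod, emod_self_of_range hα hα', emod_self_of_range hβ hβ']
  split_ifs <;> ring

end Helpers7
/-- Poisson brackets of like-sign γ-deformed monopole operators. -/
theorem monopole_bracket_rational
    (N ℓ : ℕ) (hN : 1 ≤ N) (hℓ : 3 ≤ ℓ) (γ : ℝ) (hγ : γ ≠ 0)
    (s : ℤ) (hs : s = 1 ∨ s = -1)
    (i j : Fin N) (α β : ℤ) (hα : 0 ≤ α) (hα' : α < ℓ) (hβ : 0 ≤ β) (hβ' : β < ℓ)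
    (x : M N) (hx : x ∈ U N ℓ γ) :
    Pb N ℓ (u N ℓ γ s i α) (u N ℓ γ s j β) x =
      (s : ℝ) * (1 - (if i = j then (1 : ℝ) else 0) * (if α = β then (1 : ℝ) else 0)) *
        kappa ℓ α β * u N ℓ γ s i α x * u N ℓ γ s j β x *
        (if (α, β) = ((0 : ℤ), (ℓ : ℤ) - 1) then
            1 / (q N ℓ γ i ℓ x - q N ℓ γ j ((ℓ : ℤ) - 1) x)
         else if (α, β) = ((ℓ : ℤ) - 1, (0 : ℤ)) then
            1 / (q N ℓ γ i ((ℓ : ℤ) - 1) x - q N ℓ γ j ℓ x)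
         else 1 / (q N ℓ γ i α x - q N ℓ γ j β x)) := by
  classical
  have hℓ0 : 0 < ℓ := by omega
  rw [Pb_u hα hα' hβ hβ']
  by_cases hab : α = β
  · subst hab
    have e1 : (if α = α then (1:ℝ) else 0) = 1 := if_pos rfl
    rw [e1]
    by_cases hij : i = j
    · subst hij
      rw [if_pos rfl]
      ring
    · rw [if_neg hij]
      rw [pdq_u_G hs hx hℓ hij hα hα', pdq_u_G hs hx hℓ (Ne.symm hij) hα hα']
      have hc2 : ¬((α + 1) % (ℓ:ℤ) = α) := by
        rw [emod_succ hα hα']; split_ifs <;> omega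
      have hc3 : ¬(α = (α + 1) % (ℓ:ℤ)) := by
        rw [emod_succ hα hα']; split_ifs <;> omega
      have hk : kappa ℓ α α = 2 := by
        rw [kappa_eval hα hα' hα hα', if_pos rfl, if_neg hc2, if_neg hc3]; ring
      rw [hk]
      have hb1 : (α, α) ≠ ((0 : ℤ), (ℓ : ℤ) - 1) := by
        simp only [Ne, Prod.mk.injEq]; omega
      have hb2 : (α, α) ≠ (((ℓ:ℤ) - 1), (0 : ℤ)) := by
        simp only [Ne, Prod.mk.injEq]; omega
      rw [if_neg hb1, if_neg hb2]
      have h1 : q N ℓ γ i α x - q N ℓ γ j α x ≠ 0 :=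
        sub_ne_zero.2 (qne_G hx hα hα' (Ne.symm hij))
      have h2 : q N ℓ γ j α x - q N ℓ γ i α x ≠ 0 :=
        sub_ne_zero.2 (qne_G hx hα hα' hij)
      field_simp
      try ring
  · rw [if_neg hab]
    by_cases hC : (α + s) % (ℓ:ℤ) = β
    · -- β ≡ α + s (mod ℓ)
      have hm1 : 0 ≤ (β + s) % (ℓ:ℤ) := Int.emod_nonneg _ (by omega)
      have hm2 : (β + s) % (ℓ:ℤ) < ℓ := Int.emod_lt_of_pos _ (by exact_mod_cast hℓ0)
      have hnotD : (β + s) % (ℓ:ℤ) ≠ α := by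
        rcases hs with rfl | rfl
        · rw [emod_succ hβ hβ']
          rw [emod_succ hα hα'] at hC
          split_ifs at hC ⊢ <;> omega
        · rw [emod_pred hℓ0 hβ hβ']
          rw [emod_pred hℓ0 hα hα'] at hC
          split_ifs at hC ⊢ <;> omega
      rw [pdq_u_F hs hx hℓ i j hα hα' hβ hβ' hab hC]
      have hz2 : (((β:ℤ) % (ℓ:ℤ)).toNat) ≠ α.toNat := by
        rw [emod_self_of_range hβ hβ']; omega
      have hz3 : (((β + s) % (ℓ:ℤ)).toNat) ≠ α.toNat := by
        intro h; apply hnotD; omega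
      rw [pdq_u_zero hs hx j i α.toNat hβ hβ' hz2 hz3]
      rcases hs with rfl | rfl
      · -- s = 1
        rw [emod_succ hα hα'] at hC
        by_cases hb : α + 1 = ℓ
        · rw [if_pos hb] at hC
          have hc2 : (α + 1) % (ℓ:ℤ) = β := by
            rw [emod_succ hα hα', if_pos hb]; exact hC
          have hc3 : ¬(α = (β + 1) % (ℓ:ℤ)) := by
            rw [emod_succ hβ hβ']; split_ifs <;> omega
          have hk : kappa ℓ α β = -1 := by
            rw [kappa_eval hα hα' hβ hβ', if_neg hab, if_pos hc2, if_neg hc3]; ring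
          rw [hk]
          have hb1 : (α, β) ≠ ((0 : ℤ), (ℓ : ℤ) - 1) := by
            simp only [Ne, Prod.mk.injEq]; omega
          have hb2 : (α, β) = (((ℓ:ℤ) - 1), (0 : ℤ)) := by
            simp only [Prod.mk.injEq]; omega
          rw [if_neg hb1, if_pos hb2]
          rw [show α = (ℓ:ℤ) - 1 by omega, show β = (0:ℤ) by omega,
              show (ℓ:ℤ) - 1 + 1 = (ℓ:ℤ) by ring]
          have hp : ((i, (ℓ:ℤ) - 1) : Fin N × ℤ) ≠ (j, (ℓ:ℤ)) := by
            intro h; have h2 : ((ℓ:ℤ) - 1) = (ℓ:ℤ) := congrArg Prod.snd h; omega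
          have hne : q N ℓ γ i ((ℓ:ℤ) - 1) x - q N ℓ γ j (ℓ:ℤ) x ≠ 0 :=
            sub_ne_zero.2 (qne hx (by omega) (by omega) (by omega) (by omega) hp)
          field_simp
          try ring
        · rw [if_neg hb] at hC
          have hc2 : (α + 1) % (ℓ:ℤ) = β := by
            rw [emod_succ hα hα', if_neg hb]; exact hC
          have hc3 : ¬(α = (β + 1) % (ℓ:ℤ)) := by
            rw [emod_succ hβ hβ']; split_ifs <;> omega
          have hk : kappa ℓ α β = -1 := by
            rw [kappa_eval hα hα' hβ hβ', if_neg hab, if_pos hc2, if_neg hc3]; ring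
          rw [hk]
          have hb1 : (α, β) ≠ ((0 : ℤ), (ℓ : ℤ) - 1) := by
            simp only [Ne, Prod.mk.injEq]; omega
          have hb2 : (α, β) ≠ (((ℓ:ℤ) - 1), (0 : ℤ)) := by
            simp only [Ne, Prod.mk.injEq]; omega
          rw [if_neg hb1, if_neg hb2]
          rw [show β = α + 1 from hC.symm]
          have hne : q N ℓ γ i α x - q N ℓ γ j (α + 1) x ≠ 0 :=
            sub_ne_zero.2 (qne_F hx hℓ0 (Or.inl rfl) hα hα' j)
          field_simp
          try ring
      · -- s = -1
        rw [emod_pred hℓ0 hα hα'] at hC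
        by_cases hb : α = 0
        · rw [if_pos hb] at hC
          have hc2 : ¬((α + 1) % (ℓ:ℤ) = β) := by
            rw [emod_succ hα hα']; split_ifs <;> omega
          have hc3 : α = (β + 1) % (ℓ:ℤ) := by
            rw [emod_succ hβ hβ', if_pos (by omega)]; omega
          have hk : kappa ℓ α β = -1 := by
            rw [kappa_eval hα hα' hβ hβ', if_neg hab, if_neg hc2, if_pos hc3]; ring
          rw [hk]
          have hb1 : (α, β) = ((0 : ℤ), (ℓ : ℤ) - 1) := by
            simp only [Prod.mk.injEq]; omega
          rw [if_pos hb1]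
          rw [show α = (0:ℤ) from hb, show β = (ℓ:ℤ) - 1 by omega,
              show (0:ℤ) + -1 = (-1:ℤ) by ring]
          have e1 : q N ℓ γ i (ℓ:ℤ) x = q N ℓ γ i 0 x - γ := by
            rw [show ((ℓ:ℤ)) = 0 + ℓ by ring]; exact q_shift hℓ0 i 0 x
          have e2 : q N ℓ γ j ((ℓ:ℤ) - 1) x = q N ℓ γ j (-1) x - γ := by
            rw [show (ℓ:ℤ) - 1 = -1 + ℓ by ring]; exact q_shift hℓ0 j (-1) x
          have hp : ((i, (ℓ:ℤ)) : Fin N × ℤ) ≠ (j, (ℓ:ℤ) - 1) := by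
            intro h; have h2 : (ℓ:ℤ) = (ℓ:ℤ) - 1 := congrArg Prod.snd h; omega
          have hneL : q N ℓ γ i (ℓ:ℤ) x - q N ℓ γ j ((ℓ:ℤ) - 1) x ≠ 0 :=
            sub_ne_zero.2 (qne hx (by omega) (by omega) (by omega) (by omega) hp)
          have hne : q N ℓ γ i (0:ℤ) x - q N ℓ γ j (-1:ℤ) x ≠ 0 := by
            intro h; apply hneL; rw [e1, e2]; linarith
          rw [e1, e2]
          have hne2 : q N ℓ γ i (0:ℤ) x - γ - (q N ℓ γ j (-1:ℤ) x - γ) ≠ 0 := by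
            intro h; apply hne; linarith
          field_simp
          try ring
        · rw [if_neg hb] at hC
          have hc2 : ¬((α + 1) % (ℓ:ℤ) = β) := by
            rw [emod_succ hα hα']; split_ifs <;> omega
          have hc3 : α = (β + 1) % (ℓ:ℤ) := by
            rw [emod_succ hβ hβ', if_neg (by omega)]; omega
          have hk : kappa ℓ α β = -1 := by
            rw [kappa_eval hα hα' hβ hβ', if_neg hab, if_neg hc2, if_pos hc3]; ring
          rw [hk]
          have hb1 : (α, β) ≠ ((0 : ℤ), (ℓ : ℤ) - 1) := by
            simp only [Ne, Prod.mk.injEq]; omega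
          have hb2 : (α, β) ≠ (((ℓ:ℤ) - 1), (0 : ℤ)) := by
            simp only [Ne, Prod.mk.injEq]; omega
          rw [if_neg hb1, if_neg hb2]
          rw [show β = α + -1 by omega]
          have hne : q N ℓ γ i α x - q N ℓ γ j (α + -1) x ≠ 0 :=
            sub_ne_zero.2 (qne_F hx hℓ0 (Or.inr rfl) hα hα' j)
          field_simp
          try ring
    · by_cases hD : (β + s) % (ℓ:ℤ) = α
      · -- α ≡ β + s (mod ℓ)
        have hm1 : 0 ≤ (α + s) % (ℓ:ℤ) := Int.emod_nonneg _ (by omega)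
        have hm2 : (α + s) % (ℓ:ℤ) < ℓ := Int.emod_lt_of_pos _ (by exact_mod_cast hℓ0)
        rw [pdq_u_F hs hx hℓ j i hβ hβ' hα hα' (Ne.symm hab) hD]
        have hz2 : (((α:ℤ) % (ℓ:ℤ)).toNat) ≠ β.toNat := by
          rw [emod_self_of_range hα hα']; omega
        have hz3 : (((α + s) % (ℓ:ℤ)).toNat) ≠ β.toNat := by
          intro h; apply hC; omega
        rw [pdq_u_zero hs hx i j β.toNat hα hα' hz2 hz3]
        rcases hs with rfl | rfl
        · -- s = 1
          rw [emod_succ hβ hβ'] at hD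
          by_cases hb : β + 1 = ℓ
          · rw [if_pos hb] at hD
            have hc2 : ¬((α + 1) % (ℓ:ℤ) = β) := by
              rw [emod_succ hα hα']; split_ifs <;> omega
            have hc3 : α = (β + 1) % (ℓ:ℤ) := by
              rw [emod_succ hβ hβ', if_pos hb]; omega
            have hk : kappa ℓ α β = -1 := by
              rw [kappa_eval hα hα' hβ hβ', if_neg hab, if_neg hc2, if_pos hc3]; ring
            rw [hk]
            have hb1 : (α, β) = ((0 : ℤ), (ℓ : ℤ) - 1) := by
              simp only [Prod.mk.injEq]; omega
            rw [if_pos hb1]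
            rw [show α = (0:ℤ) by omega, show β = (ℓ:ℤ) - 1 by omega,
                show (ℓ:ℤ) - 1 + 1 = (ℓ:ℤ) by ring]
            have hp : ((i, (ℓ:ℤ)) : Fin N × ℤ) ≠ (j, (ℓ:ℤ) - 1) := by
              intro h; have h2 : (ℓ:ℤ) = (ℓ:ℤ) - 1 := congrArg Prod.snd h; omega
            have hne : q N ℓ γ i (ℓ:ℤ) x - q N ℓ γ j ((ℓ:ℤ) - 1) x ≠ 0 :=
              sub_ne_zero.2 (qne hx (by omega) (by omega) (by omega) (by omega) hp)
            have hne' : q N ℓ γ j ((ℓ:ℤ) - 1) x - q N ℓ γ i (ℓ:ℤ) x ≠ 0 := by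
              intro h; apply hne; linarith
            field_simp
            try ring
          · rw [if_neg hb] at hD
            have hc2 : ¬((α + 1) % (ℓ:ℤ) = β) := by
              rw [emod_succ hα hα']; split_ifs <;> omega
            have hc3 : α = (β + 1) % (ℓ:ℤ) := by
              rw [emod_succ hβ hβ', if_neg hb]; omega
            have hk : kappa ℓ α β = -1 := by
              rw [kappa_eval hα hα' hβ hβ', if_neg hab, if_neg hc2, if_pos hc3]; ring
            rw [hk]
            have hb1 : (α, β) ≠ ((0 : ℤ), (ℓ : ℤ) - 1) := by
              simp only [Ne, Prod.mk.injEq]; omega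
            have hb2 : (α, β) ≠ (((ℓ:ℤ) - 1), (0 : ℤ)) := by
              simp only [Ne, Prod.mk.injEq]; omega
            rw [if_neg hb1, if_neg hb2]
            rw [show α = β + 1 from hD.symm]
            have hne : q N ℓ γ j β x - q N ℓ γ i (β + 1) x ≠ 0 :=
              sub_ne_zero.2 (qne_F hx hℓ0 (Or.inl rfl) hβ hβ' i)
            have hne' : q N ℓ γ i (β + 1) x - q N ℓ γ j β x ≠ 0 := by
              intro h; apply hne; linarith
            field_simp
            try ring
        · -- s = -1
          rw [emod_pred hℓ0 hβ hβ'] at hD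
          by_cases hb : β = 0
          · rw [if_pos hb] at hD
            have hc2 : (α + 1) % (ℓ:ℤ) = β := by
              rw [emod_succ hα hα', if_pos (by omega)]; omega
            have hc3 : ¬(α = (β + 1) % (ℓ:ℤ)) := by
              rw [emod_succ hβ hβ']; split_ifs <;> omega
            have hk : kappa ℓ α β = -1 := by
              rw [kappa_eval hα hα' hβ hβ', if_neg hab, if_pos hc2, if_neg hc3]; ring
            rw [hk]
            have hb1 : (α, β) ≠ ((0 : ℤ), (ℓ : ℤ) - 1) := by
              simp only [Ne, Prod.mk.injEq]; omega
            have hb2 : (α, β) = (((ℓ:ℤ) - 1), (0 : ℤ)) := by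
              simp only [Prod.mk.injEq]; omega
            rw [if_neg hb1, if_pos hb2]
            rw [show α = (ℓ:ℤ) - 1 by omega, show β = (0:ℤ) from hb,
                show (0:ℤ) + -1 = (-1:ℤ) by ring]
            have e1 : q N ℓ γ j (ℓ:ℤ) x = q N ℓ γ j 0 x - γ := by
              rw [show ((ℓ:ℤ)) = 0 + ℓ by ring]; exact q_shift hℓ0 j 0 x
            have e2 : q N ℓ γ i ((ℓ:ℤ) - 1) x = q N ℓ γ i (-1) x - γ := by
              rw [show (ℓ:ℤ) - 1 = -1 + ℓ by ring]; exact q_shift hℓ0 i (-1) x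
            have hp : ((i, (ℓ:ℤ) - 1) : Fin N × ℤ) ≠ (j, (ℓ:ℤ)) := by
              intro h; have h2 : (ℓ:ℤ) - 1 = (ℓ:ℤ) := congrArg Prod.snd h; omega
            have hneL : q N ℓ γ i ((ℓ:ℤ) - 1) x - q N ℓ γ j (ℓ:ℤ) x ≠ 0 :=
              sub_ne_zero.2 (qne hx (by omega) (by omega) (by omega) (by omega) hp)
            have hne : q N ℓ γ j (0:ℤ) x - q N ℓ γ i (-1:ℤ) x ≠ 0 := by
              intro h; apply hneL; rw [e1, e2]; linarith
            rw [e1, e2]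
            have hne2 : q N ℓ γ i (-1:ℤ) x - γ - (q N ℓ γ j (0:ℤ) x - γ) ≠ 0 := by
              intro h; apply hne; linarith
            have hne3 : -q N ℓ γ j (0:ℤ) x + q N ℓ γ i (-1:ℤ) x ≠ 0 := by
              intro h; apply hne; linarith
            field_simp
            try ring
          · rw [if_neg hb] at hD
            have hc2 : (α + 1) % (ℓ:ℤ) = β := by
              rw [emod_succ hα hα', if_neg (by omega)]; omega
            have hc3 : ¬(α = (β + 1) % (ℓ:ℤ)) := by
              rw [emod_succ hβ hβ']; split_ifs <;> omega
            have hk : kappa ℓ α β = -1 := by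
              rw [kappa_eval hα hα' hβ hβ', if_neg hab, if_pos hc2, if_neg hc3]; ring
            rw [hk]
            have hb1 : (α, β) ≠ ((0 : ℤ), (ℓ : ℤ) - 1) := by
              simp only [Ne, Prod.mk.injEq]; omega
            have hb2 : (α, β) ≠ (((ℓ:ℤ) - 1), (0 : ℤ)) := by
              simp only [Ne, Prod.mk.injEq]; omega
            rw [if_neg hb1, if_neg hb2]
            rw [show α = β + -1 by omega]
            have hne : q N ℓ γ j β x - q N ℓ γ i (β + -1) x ≠ 0 :=
              sub_ne_zero.2 (qne_F hx hℓ0 (Or.inr rfl) hβ hβ' i)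
            have hne' : q N ℓ γ i (β + -1) x - q N ℓ γ j β x ≠ 0 := by
              intro h; apply hne; linarith
            field_simp
            try ring
      · -- neither neighbor
        have hm1 : 0 ≤ (α + s) % (ℓ:ℤ) := Int.emod_nonneg _ (by omega)
        have hm2 : (α + s) % (ℓ:ℤ) < ℓ := Int.emod_lt_of_pos _ (by exact_mod_cast hℓ0)
        have hm3 : 0 ≤ (β + s) % (ℓ:ℤ) := Int.emod_nonneg _ (by omega)
        have hm4 : (β + s) % (ℓ:ℤ) < ℓ := Int.emod_lt_of_pos _ (by exact_mod_cast hℓ0)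
        have hz1 : (((α:ℤ) % (ℓ:ℤ)).toNat) ≠ β.toNat := by
          rw [emod_self_of_range hα hα']; omega
        have hz2 : (((α + s) % (ℓ:ℤ)).toNat) ≠ β.toNat := by
          intro h; apply hC; omega
        have hz3 : (((β:ℤ) % (ℓ:ℤ)).toNat) ≠ α.toNat := by
          rw [emod_self_of_range hβ hβ']; omega
        have hz4 : (((β + s) % (ℓ:ℤ)).toNat) ≠ α.toNat := by
          intro h; apply hD; omega
        rw [pdq_u_zero hs hx i j β.toNat hα hα' hz1 hz2]
        rw [pdq_u_zero hs hx j i α.toNat hβ hβ' hz3 hz4]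
        have hk1 : ¬((α + 1) % (ℓ:ℤ) = β) := by
          rcases hs with rfl | rfl
          · exact hC
          · rw [emod_succ hα hα']
            rw [emod_pred hℓ0 hβ hβ'] at hD
            split_ifs at hD ⊢ <;> omega
        have hk2 : ¬(α = (β + 1) % (ℓ:ℤ)) := by
          rcases hs with rfl | rfl
          · rw [emod_succ hβ hβ']
            rw [emod_succ hβ hβ'] at hD
            split_ifs at hD ⊢ <;> omega
          · rw [emod_succ hβ hβ']
            rw [emod_pred hℓ0 hα hα'] at hC
            split_ifs at hC ⊢ <;> omega
        have hk : kappa ℓ α β = 0 := by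
          rw [kappa_eval hα hα' hβ hβ', if_neg hab, if_neg hk1, if_neg hk2]; ring
        rw [hk]
        ring

end SpinRS
end

section
/- For every integer n ≥ 1 one has Σ_{α=1}^{ℓ} J^{αα}[n] = −γ · Tr(L^n), i.e. the trace of the loop-algebra matrix J[n] equals −γ times the n-th Hamiltonian. -/
open Real Finset Matrix Kronecker

namespace SpinRS

/-! ### Auxiliary lemmas -/

section Aux

variable {N ℓ : ℕ} {γ : ℝ} {x : M N}

lemma q_add_mul (hℓ : ℓ ≠ 0) (i : Fin N) (α m : ℤ) :
    q N ℓ γ i (α + (ℓ : ℤ) * m) x = q N ℓ γ i α x - γ * m := by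
  have hℓ' : (ℓ : ℤ) ≠ 0 := by exact_mod_cast hℓ
  unfold q
  rw [Int.add_mul_emod_self_left, Int.add_mul_ediv_left _ _ hℓ']
  push_cast
  ring

lemma q_add_ell (hℓ : ℓ ≠ 0) (i : Fin N) (α : ℤ) :
    q N ℓ γ i (α + (ℓ : ℤ)) x = q N ℓ γ i α x - γ := by
  have := q_add_mul (γ := γ) (x := x) hℓ i α 1
  simpa using this

lemma p_add_ell (hℓ : ℓ ≠ 0) (i : Fin N) (α : ℤ) :
    p N ℓ i (α + (ℓ : ℤ)) x = p N ℓ i α x := by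
  unfold p
  congr 2
  have : α + (ℓ : ℤ) = α + (ℓ : ℤ) * 1 := by ring
  rw [this, Int.add_mul_emod_self_left]

lemma chi_add_ell (hℓ : ℓ ≠ 0) (α : ℤ) (z : ℝ) :
    chi N ℓ γ (α + (ℓ : ℤ)) z x = chi N ℓ γ α (z + γ) x := by
  unfold chi
  refine Finset.prod_congr rfl fun i _ => ?_
  rw [q_add_ell hℓ]
  ring

lemma u_add_ell (hℓ : ℓ ≠ 0) (s : ℤ) (i : Fin N) (α : ℤ) :
    u N ℓ γ s i (α + (ℓ : ℤ)) x = u N ℓ γ s i α x := by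
  unfold u
  rw [p_add_ell hℓ]
  have h1 : α + (ℓ : ℤ) + s = (α + s) + (ℓ : ℤ) := by ring
  rw [h1, chi_add_ell hℓ, q_add_ell hℓ]
  have h2 : q N ℓ γ i α x - γ + γ = q N ℓ γ i α x := by ring
  rw [h2]
  congr 1
  refine Finset.prod_congr rfl fun j _ => ?_
  rw [q_add_ell hℓ j α]
  ring

lemma Lmat_add_ell (hℓ : ℓ ≠ 0) (s α : ℤ) :
    Lmat N ℓ γ s (α + (ℓ : ℤ)) x = Lmat N ℓ γ s α x := by
  ext i j
  unfold Lmat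
  simp only [Matrix.of_apply]
  have h1 : α + (ℓ : ℤ) + 1 = (α + 1) + (ℓ : ℤ) := by ring
  rw [h1, u_add_ell hℓ, q_add_ell hℓ, q_add_ell hℓ]
  ring_nf

/-- Distinctness of consecutive extended coordinates. -/
lemma q_succ_ne (hℓ : ℓ ≠ 0) (hx : x ∈ U N ℓ γ) (i j : Fin N) (α : ℤ) :
    q N ℓ γ j (α + 1) x ≠ q N ℓ γ i α x := by
  have hℓ' : (ℓ : ℤ) ≠ 0 := by exact_mod_cast hℓ
  have hℓpos : (0 : ℤ) < (ℓ : ℤ) := by positivity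
  set r := α % (ℓ : ℤ) with hr
  set m := α / (ℓ : ℤ) with hm
  have hα : α = r + (ℓ : ℤ) * m := (Int.emod_add_mul_ediv α (ℓ : ℤ)).symm
  have hr0 : 0 ≤ r := Int.emod_nonneg α hℓ'
  have hrl : r < (ℓ : ℤ) := Int.emod_lt_of_pos α hℓpos
  have e1 : q N ℓ γ i α x = q N ℓ γ i r x - γ * m := by
    rw [hα]; exact q_add_mul hℓ i r m
  have e2 : q N ℓ γ j (α + 1) x = q N ℓ γ j (r + 1) x - γ * m := by
    have : α + 1 = (r + 1) + (ℓ : ℤ) * m := by omega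
    rw [this]; exact q_add_mul hℓ j (r + 1) m
  rw [e1, e2]
  intro h
  have h' : q N ℓ γ j (r + 1) x = q N ℓ γ i r x := by linarith
  exact hx j i (r + 1) r (by omega) (by omega) hr0 (le_of_lt hrl)
    (by simp only [ne_eq, Prod.mk.injEq, not_and]; intro _; omega) h'

/-- The rank-one identity `L^α D^{α+1} - D^α L^α = e ⊗ u^{α+1}`. -/
lemma rank_one (hℓ : ℓ ≠ 0) (hx : x ∈ U N ℓ γ) (s α : ℤ) :
    Lmat N ℓ γ s α x * Matrix.diagonal (fun j => q N ℓ γ j (α + 1) x)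
      - Matrix.diagonal (fun i => q N ℓ γ i α x) * Lmat N ℓ γ s α x
    = Matrix.of (fun _ j => u N ℓ γ s j (α + 1) x) := by
  ext i j
  simp only [Matrix.sub_apply, Matrix.mul_diagonal, Matrix.diagonal_mul, Matrix.of_apply, Lmat]
  have hne : q N ℓ γ j (α + 1) x - q N ℓ γ i α x ≠ 0 :=
    sub_ne_zero.mpr (q_succ_ne hℓ hx i j α)
  field_simp

lemma prodL_zero (s α : ℤ) : prodL N ℓ γ s α 0 x = 1 := by simp [prodL]

lemma prodL_succ_right (s α : ℤ) (m : ℕ) :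
    prodL N ℓ γ s α (m + 1) x = prodL N ℓ γ s α m x * Lmat N ℓ γ s (α + m) x := by
  simp [prodL, List.range_succ]

lemma prodL_one (s α : ℤ) : prodL N ℓ γ s α 1 x = Lmat N ℓ γ s α x := by
  simp [prodL, List.range_succ]

lemma prodL_add_ell (hℓ : ℓ ≠ 0) (s α : ℤ) (m : ℕ) :
    prodL N ℓ γ s (α + (ℓ : ℤ)) m x = prodL N ℓ γ s α m x := by
  induction m with
  | zero => simp [prodL]
  | succ k ih =>
      rw [prodL_succ_right, prodL_succ_right, ih]
      congr 1
      have : α + (ℓ : ℤ) + (k : ℤ) = (α + (k : ℤ)) + (ℓ : ℤ) := by ring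
      rw [this, Lmat_add_ell hℓ]

lemma prodL_add_mul_ell (hℓ : ℓ ≠ 0) (s α : ℤ) (m k : ℕ) :
    prodL N ℓ γ s (α + (ℓ : ℤ) * (m : ℤ)) k x = prodL N ℓ γ s α k x := by
  induction m with
  | zero => simp
  | succ j ih =>
      have : α + (ℓ : ℤ) * ((j : ℤ) + 1) = (α + (ℓ : ℤ) * (j : ℤ)) + (ℓ : ℤ) := by ring
      push_cast
      rw [this, prodL_add_ell hℓ, ih]

lemma Lmat_add_mul_ell (hℓ : ℓ ≠ 0) (s α : ℤ) (m : ℕ) :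
    Lmat N ℓ γ s (α + (ℓ : ℤ) * (m : ℤ)) x = Lmat N ℓ γ s α x := by
  induction m with
  | zero => simp
  | succ j ih =>
      have : α + (ℓ : ℤ) * ((j : ℤ) + 1) = (α + (ℓ : ℤ) * (j : ℤ)) + (ℓ : ℤ) := by ring
      push_cast
      rw [this, Lmat_add_ell hℓ, ih]

lemma prodL_add' (s α : ℤ) (m k : ℕ) :
    prodL N ℓ γ s α (m + k) x = prodL N ℓ γ s α m x * prodL N ℓ γ s (α + (m : ℤ)) k x := by
  induction k with
  | zero => simp [prodL_zero]
  | succ j ih =>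
      have h1 : m + (j + 1) = (m + j) + 1 := by ring
      rw [h1, prodL_succ_right, ih, prodL_succ_right, Matrix.mul_assoc]
      congr 2
      push_cast
      ring

lemma prodL_add (s α : ℤ) (m k : ℕ) :
    prodL N ℓ γ s α (m + k) x = prodL N ℓ γ s α m x * prodL N ℓ γ s (α + (m : ℤ)) k x :=
  prodL_add' s α m k

lemma prodL_succ_left (s α : ℤ) (m : ℕ) :
    prodL N ℓ γ s α (m + 1) x = Lmat N ℓ γ s α x * prodL N ℓ γ s (α + 1) m x := by
  have h : m + 1 = 1 + m := by ring
  rw [h, prodL_add', prodL_one]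
  norm_num

lemma prodL_pow (hℓ : ℓ ≠ 0) (n : ℕ) :
    prodL N ℓ γ 1 0 (n * ℓ) x = Ltot N ℓ γ x ^ n := by
  induction n with
  | zero => simp [prodL_zero]
  | succ j ih =>
      have h1 : (j + 1) * ℓ = j * ℓ + ℓ := by ring
      rw [h1, prodL_add, ih, pow_succ]
      congr 1
      have h2 : (0 : ℤ) + ((j * ℓ : ℕ) : ℤ) = 0 + (ℓ : ℤ) * (j : ℤ) := by push_cast; ring
      rw [h2, prodL_add_mul_ell hℓ]
      rfl

/-- `T_α = tr(D^α L^α ⋯ L^{α+nℓ-1})`. -/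
noncomputable def Tα (N ℓ : ℕ) (γ : ℝ) (n : ℕ) (x : M N) (α : ℤ) : ℝ :=
  Matrix.trace (Matrix.diagonal (fun i => q N ℓ γ i α x) * prodL N ℓ γ 1 α (n * ℓ) x)

lemma Jdiag_eq (hℓ : ℓ ≠ 0) (hx : x ∈ U N ℓ γ) (n : ℕ) (hn : 1 ≤ n) (α : ℤ) :
    Jgen N ℓ γ α α (n : ℤ) x = Tα N ℓ γ n x α - Tα N ℓ γ n x (α - 1) := by
  have hℓ1 : 1 ≤ ℓ := Nat.one_le_iff_ne_zero.mpr hℓ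
  have hnl : 1 ≤ n * ℓ := Nat.one_le_iff_ne_zero.mpr (by positivity)
  set m : ℕ := n * ℓ - 1 with hmdef
  have hm : m + 1 = n * ℓ := by omega
  have hpos : (0 : ℤ) < (n : ℤ) := by exact_mod_cast hn
  rw [Jgen, if_pos hpos]
  -- rewrite Vgen as a trace
  have htoNat : (α + (n : ℤ) * (ℓ : ℤ) - 1 - α).toNat = m := by
    have hc : (n : ℤ) * (ℓ : ℤ) = ((n * ℓ : ℕ) : ℤ) := by push_cast; ring
    rw [hc]
    omega
  have hV : Vgen N ℓ γ 1 α (α + (n : ℤ) * (ℓ : ℤ) - 1) x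
      = Matrix.trace (Matrix.of (fun _ j => u N ℓ γ 1 j α x) * prodL N ℓ γ 1 α m x) := by
    unfold Vgen
    rw [htoNat]
    rw [Finset.sum_comm]
    simp only [Matrix.trace, Matrix.diag, Matrix.mul_apply, Matrix.of_apply]
  rw [hV]
  have hR := rank_one (γ := γ) (x := x) hℓ hx 1 (α - 1)
  rw [sub_add_cancel] at hR
  rw [← hR, Matrix.sub_mul, Matrix.trace_sub]
  have hL1 : Lmat N ℓ γ 1 (α - 1) x = Lmat N ℓ γ 1 (α + (m : ℤ)) x := by
    have h2 : α + (m : ℤ) = (α - 1) + (ℓ : ℤ) * (n : ℤ) := by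
      have hm' : m + 1 = ℓ * n := by rw [hm, Nat.mul_comm]
      have hc : (m : ℤ) + 1 = (ℓ : ℤ) * (n : ℤ) := by exact_mod_cast hm'
      linarith
    rw [h2, Lmat_add_mul_ell hℓ]
  have hfirst :
      Matrix.trace (Lmat N ℓ γ 1 (α - 1) x * Matrix.diagonal (fun j => q N ℓ γ j α x)
        * prodL N ℓ γ 1 α m x) = Tα N ℓ γ n x α := by
    rw [Matrix.mul_assoc, Matrix.trace_mul_comm, hL1, Matrix.mul_assoc]
    unfold Tα
    rw [← hm, prodL_succ_right]
  have hsecond :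
      Matrix.trace (Matrix.diagonal (fun i => q N ℓ γ i (α - 1) x) * Lmat N ℓ γ 1 (α - 1) x
        * prodL N ℓ γ 1 α m x) = Tα N ℓ γ n x (α - 1) := by
    unfold Tα
    rw [← hm, Matrix.mul_assoc]
    congr 1
    rw [prodL_succ_left]
    congr 2
    ring
  rw [hfirst, hsecond]

end Aux

/-- `tr J[n] = -γ H[n]`. -/
theorem trace_J_eq_neg_gamma_Ham
    (N ℓ : ℕ) (hN : 1 ≤ N) (hℓ : 3 ≤ ℓ) (γ : ℝ) (hγ : γ ≠ 0)
    (n : ℕ) (hn : 1 ≤ n) (x : M N) (hx : x ∈ U N ℓ γ) :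
    ∑ α ∈ Finset.Icc (1 : ℤ) (ℓ : ℤ), Jgen N ℓ γ α α (n : ℤ) x = -γ * Ham N ℓ γ n x := by
  have hℓ0 : ℓ ≠ 0 := by omega
  have hmap : Finset.Icc (1 : ℤ) (ℓ : ℤ)
      = (Finset.range ℓ).map (⟨fun k : ℕ => ((k : ℤ) + 1), show Function.Injective (fun k : ℕ => ((k : ℤ) + 1)) from by intro a b h; simpa using h⟩ : ℕ ↪ ℤ) := by
    ext z
    simp only [Finset.mem_Icc, Finset.mem_map, Finset.mem_range, Function.Embedding.coeFn_mk]
    constructor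
    · intro hz
      exact ⟨(z - 1).toNat, by omega, by omega⟩
    · rintro ⟨k, hk, rfl⟩
      omega
  rw [hmap, Finset.sum_map]
  simp only [Function.Embedding.coeFn_mk]
  have hstep : ∀ k ∈ Finset.range ℓ,
      Jgen N ℓ γ ((k : ℤ) + 1) ((k : ℤ) + 1) (n : ℤ) x
        = Tα N ℓ γ n x (((k + 1 : ℕ) : ℤ)) - Tα N ℓ γ n x ((k : ℕ) : ℤ) := by
    intro k _
    rw [Jdiag_eq hℓ0 hx n hn ((k : ℤ) + 1)]
    have e2 : ((k : ℤ) + 1 - 1) = ((k : ℕ) : ℤ) := by push_cast; ring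
    have e1 : ((k : ℤ) + 1) = (((k + 1 : ℕ)) : ℤ) := by push_cast; ring
    rw [e2, e1]
  rw [Finset.sum_congr rfl hstep, Finset.sum_range_sub (fun k => Tα N ℓ γ n x ((k : ℕ) : ℤ)) ℓ]
  have hTell : Tα N ℓ γ n x ((ℓ : ℕ) : ℤ) - Tα N ℓ γ n x ((0 : ℕ) : ℤ)
      = -γ * Matrix.trace (prodL N ℓ γ 1 0 (n * ℓ) x) := by
    unfold Tα
    have h0 : ((ℓ : ℕ) : ℤ) = (0 : ℤ) + (ℓ : ℤ) := by push_cast; ring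
    rw [h0, prodL_add_ell hℓ0]
    have hq : ∀ i : Fin N, q N ℓ γ i ((0 : ℤ) + (ℓ : ℤ)) x = q N ℓ γ i 0 x - γ :=
      fun i => q_add_ell hℓ0 i 0
    simp only [Matrix.trace, Matrix.diag, Matrix.diagonal_mul, hq, Nat.cast_zero]
    rw [← Finset.sum_sub_distrib, Finset.mul_sum]
    refine Finset.sum_congr rfl fun i _ => ?_
    ring
  rw [hTell, prodL_pow hℓ0 n]
  rfl

end SpinRS
end

section
/- For all α, β ∈ {0,…,ℓ−1} and all positive real numbers z ≠ w such that z and w are distinct from every Q_i^μ with 0 ≤ μ ≤ ℓ, the following identities of smooth functions on U hold (the Poisson bracket is taken in the phase-space variables, with z and w fixed parameters): {h^α(z), h^β(w)} = 0; {χ̃^α(z), e^β(w)} = δ^{αβ} χ̃^α(z) (e^β(z) − e^β(w))/(z/w − 1); and {χ̃^α(z), f^β(w)} = −δ^{αβ} χ̃^α(z) (f^β(z) − f^β(w))/(z/w − 1). -/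
open Real Finset Matrix Kronecker

namespace SpinRSK

/-- Phase space: `x`-coordinates and `p`-coordinates indexed by (particle, node). -/
abbrev M (N : ℕ) : Type := ((Fin N × ℕ) → ℝ) × ((Fin N × ℕ) → ℝ)

/-- Extended coordinate `x_i^α`, satisfying `x_i^{α+ℓ} = x_i^α + log t`. -/
noncomputable def xc (N ℓ : ℕ) (t : ℝ) (i : Fin N) (α : ℤ) (x : M N) : ℝ :=
  x.1 (i, (α % (ℓ : ℤ)).toNat) + Real.log t * ((α / (ℓ : ℤ) : ℤ) : ℝ)

/-- `Q_i^α = exp(x_i^α)`, satisfying `Q_i^{α+ℓ} = t Q_i^α`. -/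
noncomputable def Q (N ℓ : ℕ) (t : ℝ) (i : Fin N) (α : ℤ) (x : M N) : ℝ :=
  Real.exp (xc N ℓ t i α x)

/-- Extended momentum coordinate `p_i^α`, satisfying `p_i^{α+ℓ} = p_i^α`. -/
def p (N ℓ : ℕ) (i : Fin N) (α : ℤ) (x : M N) : ℝ :=
  x.2 (i, (α % (ℓ : ℤ)).toNat)

/-- Partial derivative with respect to the coordinate `x_i^a`, `0 ≤ a < ℓ`. -/
noncomputable def pdx (N : ℕ) (i : Fin N) (a : ℕ) (f : M N → ℝ) (x : M N) : ℝ :=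
  deriv (fun s : ℝ => f (Function.update x.1 (i, a) s, x.2)) (x.1 (i, a))

/-- Partial derivative with respect to the coordinate `p_i^a`, `0 ≤ a < ℓ`. -/
noncomputable def pdp (N : ℕ) (i : Fin N) (a : ℕ) (f : M N → ℝ) (x : M N) : ℝ :=
  deriv (fun s : ℝ => f (x.1, Function.update x.2 (i, a) s)) (x.2 (i, a))

/-- The Poisson bracket `{f, g}`. -/
noncomputable def Pb (N ℓ : ℕ) (f g : M N → ℝ) (x : M N) : ℝ :=
  ∑ i : Fin N, ∑ a ∈ Finset.range ℓ,
    (pdx N i a f x * pdp N i a g x - pdp N i a f x * pdx N i a g x)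

/-- The open set `U` where the extended coordinates are pairwise distinct. -/
def U (N ℓ : ℕ) (t : ℝ) : Set (M N) :=
  {x | ∀ (i j : Fin N) (α β : ℤ), 0 ≤ α → α ≤ ℓ → 0 ≤ β → β ≤ ℓ →
    (i, α) ≠ (j, β) → xc N ℓ t i α x ≠ xc N ℓ t j β x}

/-- The K-theoretic gauge polynomial `χ^α(z)`. -/
noncomputable def chi (N ℓ : ℕ) (t : ℝ) (α : ℤ) (z : ℝ) (x : M N) : ℝ :=
  ∏ i : Fin N, (Real.sqrt (z / Q N ℓ t i α x) - Real.sqrt (Q N ℓ t i α x / z))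

/-- The t-deformed K-theoretic monopole operator `u_i^{α,s}` (`s = ±1`). -/
noncomputable def u (N ℓ : ℕ) (t : ℝ) (s : ℤ) (i : Fin N) (α : ℤ) (x : M N) : ℝ :=
  Real.exp ((s : ℝ) * p N ℓ i α x) * chi N ℓ t (α + s) (Q N ℓ t i α x) x /
    ∏ j ∈ Finset.univ.erase i,
      (Real.sqrt (Q N ℓ t i α x / Q N ℓ t j α x) -
        Real.sqrt (Q N ℓ t j α x / Q N ℓ t i α x))

/-- Kronecker delta modulo `ℓ`. -/
def dmod (ℓ : ℕ) (α β : ℤ) : ℝ := if α % (ℓ : ℤ) = β % (ℓ : ℤ) then 1 else 0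

/-- The Cartan matrix `κ^{αβ}` of the necklace quiver. -/
def kappa (ℓ : ℕ) (α β : ℤ) : ℝ :=
  2 * dmod ℓ α β - dmod ℓ (α + 1) β - dmod ℓ α (β + 1)

/-- One-site `L`-operator `L^α` as a matrix-valued function. -/
noncomputable def Lmat (N ℓ : ℕ) (t : ℝ) (α : ℤ) (x : M N) :
    Matrix (Fin N) (Fin N) ℝ :=
  Matrix.of fun i j =>
    u N ℓ t 1 j (α + 1) x / (1 - Q N ℓ t j (α + 1) x / Q N ℓ t i α x)

/-- The ordered product `L^α L^{α+1} ⋯ L^{α+n-1}`. -/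
noncomputable def prodL (N ℓ : ℕ) (t : ℝ) (α : ℤ) (n : ℕ) (x : M N) :
    Matrix (Fin N) (Fin N) ℝ :=
  ((List.range n).map (fun k => Lmat N ℓ t (α + (k : ℤ)) x)).prod

/-- The total `L`-operator `L = L^0 L^1 ⋯ L^{ℓ-1}`. -/
noncomputable def Ltot (N ℓ : ℕ) (t : ℝ) (x : M N) : Matrix (Fin N) (Fin N) ℝ :=
  prodL N ℓ t 0 ℓ x

/-- The Hamiltonians `H[n] = Tr(L^n)`. -/
noncomputable def Ham (N ℓ : ℕ) (t : ℝ) (n : ℕ) (x : M N) : ℝ :=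
  Matrix.trace (Ltot N ℓ t x ^ n)

/-- The matrix Poisson bracket `{A₁, B₂}` in `End(ℝ^N) ⊗ End(ℝ^N)`. -/
noncomputable def PbMat (N ℓ : ℕ) (A B : M N → Matrix (Fin N) (Fin N) ℝ) (x : M N) :
    Matrix (Fin N × Fin N) (Fin N × Fin N) ℝ :=
  Matrix.of fun ik jl => Pb N ℓ (fun y => A y ik.1 jl.1) (fun y => B y ik.2 jl.2) x

/-- Matrix unit `e_{ij}`. -/
noncomputable def Eu (N : ℕ) (i j : Fin N) : Matrix (Fin N) (Fin N) ℝ :=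
  Matrix.single i j 1

/-- The matrix `r^α`. -/
noncomputable def rmat (N ℓ : ℕ) (t : ℝ) (α : ℤ) (x : M N) :
    Matrix (Fin N × Fin N) (Fin N × Fin N) ℝ :=
  ∑ i : Fin N, ∑ j ∈ Finset.univ.erase i,
    ((1 / (Q N ℓ t i α x / Q N ℓ t j α x - 1)) • Eu N i i
      - (1 / (1 - Q N ℓ t j α x / Q N ℓ t i α x)) • Eu N i j) ⊗ₖ (Eu N j j - Eu N j i)

/-- The matrix `r̄^α` (shifted by `-1/2`). -/
noncomputable def rbar (N ℓ : ℕ) (t : ℝ) (α : ℤ) (x : M N) :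
    Matrix (Fin N × Fin N) (Fin N × Fin N) ℝ :=
  (∑ i : Fin N, ∑ j ∈ Finset.univ.erase i,
    (1 / (1 - Q N ℓ t j α x / Q N ℓ t i α x)) • ((Eu N i i - Eu N i j) ⊗ₖ Eu N j j))
  - (1 / 2 : ℝ) • ((1 : Matrix (Fin N) (Fin N) ℝ) ⊗ₖ (1 : Matrix (Fin N) (Fin N) ℝ))

/-- The matrix `r̲^α`. -/
noncomputable def runder (N ℓ : ℕ) (t : ℝ) (α : ℤ) (x : M N) :
    Matrix (Fin N × Fin N) (Fin N × Fin N) ℝ :=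
  ∑ i : Fin N, ∑ j ∈ Finset.univ.erase i,
    (1 / (1 - Q N ℓ t j α x / Q N ℓ t i α x)) •
      (Eu N i j ⊗ₖ Eu N j i - Eu N i i ⊗ₖ Eu N j j)

/-- Swap of the two tensor factors of `End(ℝ^N) ⊗ End(ℝ^N)`. -/
def swapT (N : ℕ) (R : Matrix (Fin N × Fin N) (Fin N × Fin N) ℝ) :
    Matrix (Fin N × Fin N) (Fin N × Fin N) ℝ :=
  Matrix.of fun ik jl => R (ik.2, ik.1) (jl.2, jl.1)

/-- The zero mode `E^α = Σ_i u_i^{α,+}`. -/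
noncomputable def Egen (N ℓ : ℕ) (t : ℝ) (α : ℤ) (x : M N) : ℝ :=
  ∑ i : Fin N, u N ℓ t 1 i α x

/-- The zero mode `F^α = Σ_i u_i^{α,-}`. -/
noncomputable def Fgen (N ℓ : ℕ) (t : ℝ) (α : ℤ) (x : M N) : ℝ :=
  ∑ i : Fin N, u N ℓ t (-1) i α x

/-- The Cartan zero mode `K^α = Π_i Q_i^α (Q_i^{α+1} Q_i^{α-1})^{-1/2}`. -/
noncomputable def Kcar (N ℓ : ℕ) (t : ℝ) (α : ℤ) (x : M N) : ℝ :=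
  ∏ i : Fin N, Q N ℓ t i α x / Real.sqrt (Q N ℓ t i (α + 1) x * Q N ℓ t i (α - 1) x)

/-- Generating series `e^α(z)`. -/
noncomputable def egens (N ℓ : ℕ) (t : ℝ) (α : ℤ) (z : ℝ) (x : M N) : ℝ :=
  ∑ i : Fin N, u N ℓ t 1 i α x / (1 - Q N ℓ t i α x / z)

/-- Generating series `f^α(z)`. -/
noncomputable def fgens (N ℓ : ℕ) (t : ℝ) (α : ℤ) (z : ℝ) (x : M N) : ℝ :=
  ∑ i : Fin N, u N ℓ t (-1) i α x / (1 - Q N ℓ t i α x / z)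

/-- The series `χ̃^α(z) = Π_i (1 - Q_i^α/z)`. -/
noncomputable def chit (N ℓ : ℕ) (t : ℝ) (α : ℤ) (z : ℝ) (x : M N) : ℝ :=
  ∏ i : Fin N, (1 - Q N ℓ t i α x / z)

/-- The series `h^α(z)`. -/
noncomputable def hgens (N ℓ : ℕ) (t : ℝ) (α : ℤ) (z : ℝ) (x : M N) : ℝ :=
  chit N ℓ t (α + 1) z x * chit N ℓ t (α - 1) z x / (chit N ℓ t α z x) ^ 2 *
    ∏ i : Fin N, Q N ℓ t i α x / Real.sqrt (Q N ℓ t i (α + 1) x * Q N ℓ t i (α - 1) x)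

/-- The modified one-site operator `L̃^α = (Q^α)⁻¹ L^α Q^{α+1}`. -/
noncomputable def Ltil (N ℓ : ℕ) (t : ℝ) (α : ℤ) (x : M N) :
    Matrix (Fin N) (Fin N) ℝ :=
  Matrix.of fun i j => Lmat N ℓ t α x i j * Q N ℓ t j (α + 1) x / Q N ℓ t i α x

/-- The ordered product `L̃^α L̃^{α+1} ⋯ L̃^{α+n-1}`. -/
noncomputable def prodLtil (N ℓ : ℕ) (t : ℝ) (α : ℤ) (n : ℕ) (x : M N) :
    Matrix (Fin N) (Fin N) ℝ :=
  ((List.range n).map (fun k => Ltil N ℓ t (α + (k : ℤ)) x)).prod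

/-- The spin variables `a_i^α = (L^0 ⋯ L^{α-2} e)_i`, `α ∈ {1,…,ℓ}`. -/
noncomputable def aspin (N ℓ : ℕ) (t : ℝ) (α : ℤ) (x : M N) (i : Fin N) : ℝ :=
  ∑ j : Fin N, prodL N ℓ t 0 (α - 1).toNat x i j

/-- The spin variables `c_j^α = (u^{α,+} L̃^α ⋯ L̃^{ℓ-1})_j`, `α ∈ {1,…,ℓ}`. -/
noncomputable def cspin (N ℓ : ℕ) (t : ℝ) (α : ℤ) (x : M N) (j : Fin N) : ℝ :=
  ∑ i : Fin N, u N ℓ t 1 i α x * prodLtil N ℓ t α ((ℓ : ℤ) - α).toNat x i j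

section Aux
variable {N ℓ : ℕ} {t : ℝ}

lemma pdp_of_fst (f : M N → ℝ) (hf : ∀ (x1 : (Fin N × ℕ) → ℝ) (b b' : (Fin N × ℕ) → ℝ),
    f (x1, b) = f (x1, b')) (j : Fin N) (a : ℕ) (x : M N) : pdp N j a f x = 0 := by
  unfold pdp
  have h : (fun s : ℝ => f (x.1, Function.update x.2 (j, a) s)) = fun _ => f x := by
    funext s; exact hf x.1 _ x.2
  rw [h]; exact deriv_const _ _

lemma hQ_aux (α : ℤ) (hα : 0 ≤ α) (hα' : α < (ℓ : ℤ)) (i : Fin N) (y : M N) :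
    Q N ℓ t i α y = Real.exp (y.1 (i, α.toNat)) := by
  unfold Q xc
  rw [Int.emod_eq_of_lt hα hα', Int.ediv_eq_zero_of_lt hα hα']
  simp

lemma pdx_chit (α : ℤ) (hα : 0 ≤ α) (hα' : α < (ℓ : ℤ)) (z : ℝ) (x : M N) (j : Fin N) (a : ℕ) :
    pdx N j a (chit N ℓ t α z) x =
      if a = α.toNat then
        -(Q N ℓ t j α x / z) * ∏ i ∈ Finset.univ.erase j, (1 - Q N ℓ t i α x / z)
      else 0 := by
  have hQ := fun (i : Fin N) (y : M N) => hQ_aux (t := t) α hα hα' i y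
  unfold pdx
  by_cases h : a = α.toNat
  · subst h
    have hfun : (fun s : ℝ => chit N ℓ t α z (Function.update x.1 (j, α.toNat) s, x.2))
        = fun s => (1 - Real.exp s / z) *
            ∏ i ∈ Finset.univ.erase j, (1 - Q N ℓ t i α x / z) := by
      funext s
      unfold chit
      rw [← Finset.mul_prod_erase _ _ (Finset.mem_univ j)]
      congr 1
      · rw [hQ]
        show 1 - Real.exp (Function.update x.1 (j, α.toNat) s (j, α.toNat)) / z = _
        rw [Function.update_self]
      · refine Finset.prod_congr rfl fun i hi => ?_
        rw [hQ i, hQ i]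
        show 1 - Real.exp (Function.update x.1 (j, α.toNat) s (i, α.toNat)) / z = _
        rw [Function.update_of_ne (by simp [Prod.ext_iff, (Finset.mem_erase.mp hi).1])]
    rw [hfun]
    have hd : HasDerivAt
        (fun s : ℝ => (1 - Real.exp s / z) * ∏ i ∈ Finset.univ.erase j, (1 - Q N ℓ t i α x / z))
        (-(Real.exp (x.1 (j, α.toNat)) / z) * ∏ i ∈ Finset.univ.erase j, (1 - Q N ℓ t i α x / z))
        (x.1 (j, α.toNat)) :=
      (((Real.hasDerivAt_exp _).div_const z).const_sub 1).mul_const _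
    rw [hd.deriv, if_pos rfl, hQ]
  · have hfun : (fun s : ℝ => chit N ℓ t α z (Function.update x.1 (j, a) s, x.2))
        = fun _ => chit N ℓ t α z x := by
      funext s
      unfold chit
      refine Finset.prod_congr rfl fun i _ => ?_
      rw [hQ i, hQ i]
      show 1 - Real.exp (Function.update x.1 (j, a) s (i, α.toNat)) / z = _
      rw [Function.update_of_ne (by simp [Prod.ext_iff]; intro _; exact fun hh => h hh.symm)]
    rw [hfun, if_neg h]; exact deriv_const _ _

noncomputable def Dfun (N ℓ : ℕ) (t : ℝ) (σ β : ℤ) (w : ℝ) (x : M N) (i : Fin N) : ℝ :=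
  chi N ℓ t (β + σ) (Q N ℓ t i β x) x /
    (∏ k ∈ Finset.univ.erase i,
      (Real.sqrt (Q N ℓ t i β x / Q N ℓ t k β x) - Real.sqrt (Q N ℓ t k β x / Q N ℓ t i β x))) /
    (1 - Q N ℓ t i β x / w)

lemma pdp_gens (σ : ℤ) (β : ℤ) (hβ : 0 ≤ β) (hβ' : β < (ℓ : ℤ)) (w : ℝ) (x : M N)
    (j : Fin N) (a : ℕ) :
    pdp N j a (fun y => ∑ i : Fin N, u N ℓ t σ i β y / (1 - Q N ℓ t i β y / w)) x =
      if a = β.toNat then (σ : ℝ) * (u N ℓ t σ j β x / (1 - Q N ℓ t j β x / w)) else 0 := by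
  have hm : β % (ℓ : ℤ) = β := Int.emod_eq_of_lt hβ hβ'
  have hterm : ∀ (b : (Fin N × ℕ) → ℝ) (i : Fin N),
      u N ℓ t σ i β (x.1, b) / (1 - Q N ℓ t i β (x.1, b) / w)
        = Real.exp ((σ : ℝ) * b (i, β.toNat)) * Dfun N ℓ t σ β w x i := by
    intro b i
    show u N ℓ t σ i β (x.1, b) / (1 - Q N ℓ t i β (x.1, b) / w)
        = Real.exp ((σ : ℝ) * b (i, β.toNat)) *
          (chi N ℓ t (β + σ) (Q N ℓ t i β (x.1, b)) (x.1, b) /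
            (∏ k ∈ Finset.univ.erase i,
              (Real.sqrt (Q N ℓ t i β (x.1, b) / Q N ℓ t k β (x.1, b)) -
                Real.sqrt (Q N ℓ t k β (x.1, b) / Q N ℓ t i β (x.1, b)))) /
            (1 - Q N ℓ t i β (x.1, b) / w))
    simp [u, p, hm, mul_div_assoc]
  unfold pdp
  have hfun : (fun s : ℝ => ∑ i : Fin N,
        u N ℓ t σ i β (x.1, Function.update x.2 (j, a) s) /
          (1 - Q N ℓ t i β (x.1, Function.update x.2 (j, a) s) / w))
      = fun s => ∑ i : Fin N,
          Real.exp ((σ : ℝ) * Function.update x.2 (j, a) s (i, β.toNat)) * Dfun N ℓ t σ β w x i := by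
    funext s; exact Finset.sum_congr rfl fun i _ => hterm _ i
  rw [show (fun s : ℝ => (fun y => ∑ i : Fin N, u N ℓ t σ i β y / (1 - Q N ℓ t i β y / w))
      (x.1, Function.update x.2 (j, a) s)) = _ from hfun]
  by_cases h : a = β.toNat
  · subst h
    have hsplit : (fun s : ℝ => ∑ i : Fin N,
          Real.exp ((σ : ℝ) * Function.update x.2 (j, β.toNat) s (i, β.toNat)) * Dfun N ℓ t σ β w x i)
        = fun s => Real.exp ((σ : ℝ) * s) * Dfun N ℓ t σ β w x j +
            ∑ i ∈ Finset.univ.erase j, Real.exp ((σ : ℝ) * x.2 (i, β.toNat)) * Dfun N ℓ t σ β w x i := by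
      funext s
      rw [← Finset.add_sum_erase _ _ (Finset.mem_univ j), Function.update_self]
      congr 1
      refine Finset.sum_congr rfl fun i hi => ?_
      rw [Function.update_of_ne (by simp [Prod.ext_iff, (Finset.mem_erase.mp hi).1])]
    rw [hsplit, if_pos rfl]
    have h1 : HasDerivAt (fun s : ℝ => (σ : ℝ) * s) (σ : ℝ) (x.2 (j, β.toNat)) := by
      simpa using (hasDerivAt_id (x.2 (j, β.toNat))).const_mul (σ : ℝ)
    have hd := ((h1.exp).mul_const (Dfun N ℓ t σ β w x j)).add_const
      (∑ i ∈ Finset.univ.erase j, Real.exp ((σ : ℝ) * x.2 (i, β.toNat)) * Dfun N ℓ t σ β w x i)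
    rw [hd.deriv]
    rw [show u N ℓ t σ j β x / (1 - Q N ℓ t j β x / w)
        = Real.exp ((σ : ℝ) * x.2 (j, β.toNat)) * Dfun N ℓ t σ β w x j from hterm x.2 j]
    ring
  · have hconst : (fun s : ℝ => ∑ i : Fin N,
          Real.exp ((σ : ℝ) * Function.update x.2 (j, a) s (i, β.toNat)) * Dfun N ℓ t σ β w x i)
        = fun _ => ∑ i : Fin N, Real.exp ((σ : ℝ) * x.2 (i, β.toNat)) * Dfun N ℓ t σ β w x i := by
      funext s
      refine Finset.sum_congr rfl fun i _ => ?_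
      rw [Function.update_of_ne (by simp [Prod.ext_iff]; intro _; exact fun hh => h hh.symm)]
    rw [hconst, if_neg h]; exact deriv_const _ _

end Aux
lemma bracket_chit_gens (N ℓ : ℕ) (t : ℝ) (σ α β : ℤ) (hα : 0 ≤ α) (hα' : α < (ℓ:ℤ))
    (hβ : 0 ≤ β) (hβ' : β < (ℓ:ℤ)) (x : M N) (z w : ℝ)
    (hz0 : z ≠ 0) (hw0 : w ≠ 0) (hzw : z ≠ w)
    (hzα : ∀ i : Fin N, z ≠ Q N ℓ t i α x) (hwβ : ∀ i : Fin N, w ≠ Q N ℓ t i β x) :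
    Pb N ℓ (chit N ℓ t α z) (fun y => ∑ i : Fin N, u N ℓ t σ i β y / (1 - Q N ℓ t i β y / w)) x
      = (if α = β then (1:ℝ) else 0) * (σ:ℝ) * (chit N ℓ t α z x *
          ((∑ i : Fin N, u N ℓ t σ i β x / (1 - Q N ℓ t i β x / z)) -
           (∑ i : Fin N, u N ℓ t σ i β x / (1 - Q N ℓ t i β x / w))) / (z / w - 1)) := by
  have hpdpchit : ∀ (j : Fin N) (a : ℕ), pdp N j a (chit N ℓ t α z) x = 0 := fun j a =>
    pdp_of_fst (chit N ℓ t α z) (fun _ _ _ => rfl) j a x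
  unfold Pb
  have hsummand : ∀ (j : Fin N), ∀ a ∈ Finset.range ℓ,
      pdx N j a (chit N ℓ t α z) x *
          pdp N j a (fun y => ∑ i : Fin N, u N ℓ t σ i β y / (1 - Q N ℓ t i β y / w)) x
        - pdp N j a (chit N ℓ t α z) x *
          pdx N j a (fun y => ∑ i : Fin N, u N ℓ t σ i β y / (1 - Q N ℓ t i β y / w)) x
      = (if a = α.toNat then
          -(Q N ℓ t j α x / z) * ∏ i ∈ Finset.univ.erase j, (1 - Q N ℓ t i α x / z) else 0) *
        (if a = β.toNat then (σ:ℝ) * (u N ℓ t σ j β x / (1 - Q N ℓ t j β x / w)) else 0) := by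
    intro j a _
    rw [hpdpchit, pdx_chit α hα hα' z x j a, pdp_gens σ β hβ hβ' w x j a]
    ring
  rw [Finset.sum_congr rfl fun j _ => Finset.sum_congr rfl (hsummand j)]
  by_cases hab : α = β
  · subst hab
    rw [if_pos rfl, one_mul]
    have hc : ∀ (X Y : ℝ) (a : ℕ),
        (if a = α.toNat then X else 0) * (if a = α.toNat then Y else 0)
          = if a = α.toNat then X * Y else 0 := by
      intro X Y a; split <;> simp
    simp only [hc]
    have hmem : α.toNat ∈ Finset.range ℓ := by simp only [Finset.mem_range]; omega
    rw [Finset.sum_congr rfl fun j _ =>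
      (Finset.sum_ite_eq' (Finset.range ℓ) α.toNat _).trans (if_pos hmem)]
    rw [← Finset.sum_sub_distrib, Finset.mul_sum, Finset.sum_div, Finset.mul_sum]
    refine Finset.sum_congr rfl fun j _ => ?_
    have h1 : 1 - Q N ℓ t j α x / z ≠ 0 :=
      sub_ne_zero.mpr (fun hh => hzα j ((div_eq_one_iff_eq hz0).mp hh.symm).symm)
    have h2 : 1 - Q N ℓ t j α x / w ≠ 0 :=
      sub_ne_zero.mpr (fun hh => hwβ j ((div_eq_one_iff_eq hw0).mp hh.symm).symm)
    have h3 : z / w - 1 ≠ 0 := sub_ne_zero.mpr (fun hh => hzw ((div_eq_one_iff_eq hw0).mp hh))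
    rw [chit, ← Finset.mul_prod_erase _ _ (Finset.mem_univ j)]
    generalize (∏ i ∈ Finset.univ.erase j, (1 - Q N ℓ t i α x / z)) = P
    generalize u N ℓ t σ j α x = U
    generalize hq : Q N ℓ t j α x = q
    rw [hq] at h1 h2
    have h1' : z - q ≠ 0 := sub_ne_zero.mpr (hq ▸ hzα j)
    have h2' : w - q ≠ 0 := sub_ne_zero.mpr (hq ▸ hwβ j)
    have h4 : z - w ≠ 0 := sub_ne_zero.mpr hzw
    field_simp
    ring
  · have hne : α.toNat ≠ β.toNat := fun hh => hab (by omega)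
    rw [if_neg hab, zero_mul, zero_mul]
    refine Finset.sum_eq_zero fun j _ => Finset.sum_eq_zero fun a _ => ?_
    by_cases h : a = α.toNat
    · subst h; rw [if_neg hne, mul_zero]
    · rw [if_neg h, zero_mul]
/-- classical quantum toroidal relations for the generating series. -/
theorem toroidal_relations_Ktheoretic
    (N ℓ : ℕ) (hN : 1 ≤ N) (hℓ : 3 ≤ ℓ) (t : ℝ) (ht : 0 < t) (ht' : t ≠ 1)
    (α β : ℤ) (hα : 0 ≤ α) (hα' : α < ℓ) (hβ : 0 ≤ β) (hβ' : β < ℓ)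
    (x : M N) (hx : x ∈ U N ℓ t)
    (z w : ℝ) (hz0 : 0 < z) (hw0 : 0 < w) (hzw : z ≠ w)
    (hz : ∀ (i : Fin N) (μ : ℤ), 0 ≤ μ → μ ≤ ℓ → z ≠ Q N ℓ t i μ x)
    (hw : ∀ (i : Fin N) (μ : ℤ), 0 ≤ μ → μ ≤ ℓ → w ≠ Q N ℓ t i μ x) :
    Pb N ℓ (hgens N ℓ t α z) (hgens N ℓ t β w) x = 0 ∧
    Pb N ℓ (chit N ℓ t α z) (egens N ℓ t β w) x =
      (if α = β then (1 : ℝ) else 0) * chit N ℓ t α z x *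
        (egens N ℓ t β z x - egens N ℓ t β w x) / (z / w - 1) ∧
    Pb N ℓ (chit N ℓ t α z) (fgens N ℓ t β w) x =
      -((if α = β then (1 : ℝ) else 0) * chit N ℓ t α z x *
        (fgens N ℓ t β z x - fgens N ℓ t β w x) / (z / w - 1)) := by
  refine ⟨?_, ?_, ?_⟩
  · unfold Pb
    refine Finset.sum_eq_zero fun j _ => Finset.sum_eq_zero fun a _ => ?_
    rw [pdp_of_fst (hgens N ℓ t α z) (fun _ _ _ => rfl) j a x,
      pdp_of_fst (hgens N ℓ t β w) (fun _ _ _ => rfl) j a x]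
    ring
  · have h := bracket_chit_gens N ℓ t 1 α β hα hα' hβ hβ' x z w (ne_of_gt hz0) (ne_of_gt hw0)
      hzw (fun i => hz i α hα hα'.le) (fun i => hw i β hβ hβ'.le)
    rw [show egens N ℓ t β w = (fun y => ∑ i : Fin N, u N ℓ t 1 i β y / (1 - Q N ℓ t i β y / w))
      from rfl, h]
    simp only [egens, Int.cast_one]
    ring
  · have h := bracket_chit_gens N ℓ t (-1) α β hα hα' hβ hβ' x z w (ne_of_gt hz0) (ne_of_gt hw0)
      hzw (fun i => hz i α hα hα'.le) (fun i => hw i β hβ hβ'.le)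
    rw [show fgens N ℓ t β w = (fun y => ∑ i : Fin N, u N ℓ t (-1) i β y / (1 - Q N ℓ t i β y / w))
      from rfl, h]
    simp only [fgens, Int.cast_neg, Int.cast_one]
    ring

end SpinRSK
end

section
/- For all i, j ∈ {1,…,N}, the (i,j) entry of the total L-operator satisfies L_{ij} = (Σ_{ρ=1}^{ℓ} a_i^ρ c_j^ρ)/(1 − Q_j^ℓ/Q_i^0); equivalently, Σ_{ρ=1}^{ℓ} a_i^ρ c_j^ρ = L_{ij} (1 − Q_j^ℓ/Q_i^0), where Q_j^ℓ = t·Q_j^0. -/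
open Real Finset Matrix Kronecker

namespace SpinRSK

lemma Q_pos (N ℓ : ℕ) (t : ℝ) (i : Fin N) (α : ℤ) (x : M N) : 0 < Q N ℓ t i α x :=
  Real.exp_pos _

lemma one_sub_div_ne {a b : ℝ} (ha : 0 < a) (h : a ≠ b) : 1 - b / a ≠ 0 := by
  intro h0
  apply h
  field_simp at h0
  linarith

lemma one_sub_ne (N ℓ : ℕ) (t : ℝ) {x : M N} (hx : x ∈ U N ℓ t) (i j : Fin N) (α β : ℤ)
    (hα0 : 0 ≤ α) (hα1 : α ≤ ℓ) (hβ0 : 0 ≤ β) (hβ1 : β ≤ ℓ) (h : ¬(i = j ∧ α = β)) :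
    1 - Q N ℓ t j β x / Q N ℓ t i α x ≠ 0 := by
  have hne : (i, α) ≠ (j, β) := by
    intro hc
    exact h ⟨congrArg Prod.fst hc, congrArg Prod.snd hc⟩
  have hxc := hx i j α β hα0 hα1 hβ0 hβ1 hne
  have hQ : Q N ℓ t i α x ≠ Q N ℓ t j β x := by
    simpa [Q, Real.exp_eq_exp] using hxc
  exact one_sub_div_ne (Q_pos N ℓ t i α x) hQ

lemma prodL_eq (N ℓ : ℕ) (t : ℝ) (α : ℤ) (n : ℕ) (x : M N) :
    prodL N ℓ t α n x
      = ((List.range n).map (fun k : ℕ => Lmat N ℓ t (α + (k : ℤ)) x)).prod := by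
  unfold prodL
  simp only [List.pure_def, List.bind_eq_flatMap, ← List.map_eq_flatMap, List.map_map]
  rfl

lemma prodLtil_eq' (N ℓ : ℕ) (t : ℝ) (α : ℤ) (n : ℕ) (x : M N) :
    prodLtil N ℓ t α n x
      = ((List.range n).map (fun k : ℕ => Ltil N ℓ t (α + (k : ℤ)) x)).prod := by
  unfold prodLtil
  simp only [List.pure_def, List.bind_eq_flatMap, ← List.map_eq_flatMap, List.map_map]
  rfl

lemma prodL_succ_right (N ℓ : ℕ) (t : ℝ) (α : ℤ) (n : ℕ) (x : M N) :
    prodL N ℓ t α (n + 1) x = prodL N ℓ t α n x * Lmat N ℓ t (α + n) x := by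
  simp [prodL_eq, List.range_succ]

lemma prodL_succ_left (N ℓ : ℕ) (t : ℝ) (α : ℤ) (n : ℕ) (x : M N) :
    prodL N ℓ t α (n + 1) x = Lmat N ℓ t α x * prodL N ℓ t (α + 1) n x := by
  rw [prodL_eq, prodL_eq, List.range_succ_eq_map, List.map_cons, List.prod_cons,
    List.map_map]
  norm_num
  congr 1
  congr 1
  apply List.map_congr_left
  intro k _
  simp only [Function.comp_apply]
  congr 1
  push_cast
  ring

lemma prodLtil_succ_left (N ℓ : ℕ) (t : ℝ) (α : ℤ) (n : ℕ) (x : M N) :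
    prodLtil N ℓ t α (n + 1) x = Ltil N ℓ t α x * prodLtil N ℓ t (α + 1) n x := by
  rw [prodLtil_eq', prodLtil_eq', List.range_succ_eq_map, List.map_cons, List.prod_cons,
    List.map_map]
  norm_num
  congr 1
  congr 1
  apply List.map_congr_left
  intro k _
  simp only [Function.comp_apply]
  congr 1
  push_cast
  ring

lemma prodLtil_entry (N ℓ : ℕ) (t : ℝ) (n : ℕ) : ∀ (α : ℤ) (x : M N) (i j : Fin N),
    prodLtil N ℓ t α n x i j
      = prodL N ℓ t α n x i j * Q N ℓ t j (α + n) x / Q N ℓ t i α x := by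
  induction n with
  | zero =>
    intro α x i j
    have hi : Q N ℓ t i α x ≠ 0 := (Q_pos N ℓ t i α x).ne'
    rw [prodLtil_eq', prodL_eq]
    simp only [List.range_zero, List.map_nil, List.prod_nil, Nat.cast_zero, add_zero]
    by_cases h : i = j
    · subst h
      rw [Matrix.one_apply_eq]
      field_simp
    · rw [Matrix.one_apply_ne h]
      simp
  | succ n ih =>
    intro α x i j
    rw [prodLtil_succ_left, prodL_succ_left, Matrix.mul_apply, Matrix.mul_apply,
      Finset.sum_mul, Finset.sum_div]
    refine Finset.sum_congr rfl fun k _ => ?_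
    rw [ih]
    have hk : Q N ℓ t k (α + 1) x ≠ 0 := (Q_pos N ℓ t k (α + 1) x).ne'
    have hi : Q N ℓ t i α x ≠ 0 := (Q_pos N ℓ t i α x).ne'
    have hc : α + ((n : ℤ) + 1) = α + 1 + (n : ℤ) := by ring
    simp only [Ltil, Matrix.of_apply, Nat.cast_add, Nat.cast_one, hc]
    field_simp

lemma LminusLtil (N ℓ : ℕ) (t : ℝ) {x : M N} (hx : x ∈ U N ℓ t) {α : ℤ}
    (h0 : 0 ≤ α) (h1 : α + 1 ≤ ℓ) (m k : Fin N) :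
    Lmat N ℓ t α x m k - Ltil N ℓ t α x m k = u N ℓ t 1 k (α + 1) x := by
  have hne : 1 - Q N ℓ t k (α + 1) x / Q N ℓ t m α x ≠ 0 :=
    one_sub_ne N ℓ t hx m k α (α + 1) h0 (by omega) (by omega) h1 (by omega)
  simp only [Lmat, Ltil, Matrix.of_apply]
  rw [mul_div_assoc, ← mul_one_sub, div_mul_cancel₀ _ hne]

/-- the total K-theoretic L-operator in terms of the spin variables. -/
theorem total_L_spin_formula_Ktheoretic
    (N ℓ : ℕ) (hN : 1 ≤ N) (hℓ : 3 ≤ ℓ) (t : ℝ) (ht : 0 < t) (ht' : t ≠ 1)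
    (i j : Fin N) (x : M N) (hx : x ∈ U N ℓ t) :
    Ltot N ℓ t x i j =
      (∑ ρ ∈ Finset.Icc (1 : ℤ) (ℓ : ℤ), aspin N ℓ t ρ x i * cspin N ℓ t ρ x j) /
        (1 - Q N ℓ t j ℓ x / Q N ℓ t i 0 x) ∧
    (∑ ρ ∈ Finset.Icc (1 : ℤ) (ℓ : ℤ), aspin N ℓ t ρ x i * cspin N ℓ t ρ x j) =
      Ltot N ℓ t x i j * (1 - Q N ℓ t j ℓ x / Q N ℓ t i 0 x) := by
  have hden : 1 - Q N ℓ t j ℓ x / Q N ℓ t i 0 x ≠ 0 :=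
    one_sub_ne N ℓ t hx i j 0 (ℓ : ℤ) le_rfl (by positivity) (by positivity) le_rfl
      (by omega)
  -- the telescoping function
  set g : ℕ → ℝ := fun σ =>
    (prodL N ℓ t 0 σ x * prodLtil N ℓ t (σ : ℤ) (ℓ - σ) x) i j with hg
  have key : (∑ ρ ∈ Finset.Icc (1 : ℤ) (ℓ : ℤ), aspin N ℓ t ρ x i * cspin N ℓ t ρ x j)
      = g ℓ - g 0 := by
    rw [show Finset.Icc (1 : ℤ) (ℓ : ℤ)
        = Finset.map ⟨fun k : ℕ => (k : ℤ) + 1, by intro a b h; simp at h; omega⟩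
            (Finset.range ℓ) by
      ext a
      simp only [Finset.mem_map, Finset.mem_range, Finset.mem_Icc,
        Function.Embedding.coeFn_mk]
      constructor
      · rintro ⟨h1, h2⟩; exact ⟨(a - 1).toNat, by omega, by show ((a - 1).toNat : ℤ) + 1 = a; omega⟩
      · rintro ⟨k, hk, rfl⟩; show 1 ≤ (k : ℤ) + 1 ∧ (k : ℤ) + 1 ≤ ℓ; omega]
    rw [Finset.sum_map, ← Finset.sum_range_sub g]
    refine Finset.sum_congr rfl fun k hk => ?_
    simp only [Finset.mem_range] at hk
    show aspin N ℓ t ((k : ℤ) + 1) x i * cspin N ℓ t ((k : ℤ) + 1) x j = g (k + 1) - g k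
    have ht1 : ((k : ℤ) + 1 - 1).toNat = k := by omega
    have ht2 : ((ℓ : ℤ) - ((k : ℤ) + 1)).toNat = ℓ - (k + 1) := by omega
    rw [aspin, cspin, ht1, ht2]
    set A := prodL N ℓ t 0 k x with hA
    set B := prodLtil N ℓ t ((k : ℤ) + 1) (ℓ - (k + 1)) x with hB
    have hu : ∀ m n : Fin N,
        u N ℓ t 1 n ((k : ℤ) + 1) x = Lmat N ℓ t (k : ℤ) x m n - Ltil N ℓ t (k : ℤ) x m n :=
      fun m n => (LminusLtil N ℓ t hx (by positivity) (by omega) m n).symm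
    calc (∑ m, A i m) * (∑ n, u N ℓ t 1 n ((k : ℤ) + 1) x * B n j)
        = ∑ m, ∑ n, A i m * (u N ℓ t 1 n ((k : ℤ) + 1) x * B n j) := by
          rw [Finset.sum_mul_sum]
      _ = ∑ m, ∑ n, (A i m * Lmat N ℓ t (k : ℤ) x m n * B n j
            - A i m * Ltil N ℓ t (k : ℤ) x m n * B n j) := by
          refine Finset.sum_congr rfl fun m _ => Finset.sum_congr rfl fun n _ => ?_
          rw [hu m n]; ring
      _ = (A * Lmat N ℓ t (k : ℤ) x * B) i j - (A * (Ltil N ℓ t (k : ℤ) x * B)) i j := by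
          simp only [Finset.sum_sub_distrib]
          congr 1
          · simp only [Matrix.mul_apply, Finset.sum_mul]
            rw [Finset.sum_comm]
          · simp only [Matrix.mul_apply, Finset.mul_sum, mul_assoc]
      _ = g (k + 1) - g k := by
          congr 1
          · rw [hg]
            have h1 : prodL N ℓ t 0 (k + 1) x = A * Lmat N ℓ t (k : ℤ) x := by
              rw [hA, prodL_succ_right]
              norm_num
            simp only [h1, Nat.cast_add, Nat.cast_one]
            rfl
          · rw [hg]
            have h2 : prodLtil N ℓ t (k : ℤ) (ℓ - k) x = Ltil N ℓ t (k : ℤ) x * B := by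
              rw [hB, show ℓ - k = (ℓ - (k + 1)) + 1 by omega, prodLtil_succ_left]
            simp only [h2]
            rfl
  have hgl : g ℓ = Ltot N ℓ t x i j := by
    rw [hg]
    simp only [Nat.sub_self]
    have h1 : prodLtil N ℓ t (ℓ : ℤ) 0 x = 1 := by
      rw [prodLtil_eq']; simp
    rw [h1, Matrix.mul_one]
    rfl
  have hg0 : g 0 = Ltot N ℓ t x i j * Q N ℓ t j ℓ x / Q N ℓ t i 0 x := by
    rw [hg]
    simp only [Nat.sub_zero, Nat.cast_zero]
    have h0 : prodL N ℓ t 0 0 x = 1 := by rw [prodL_eq]; simp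
    rw [h0, Matrix.one_mul, prodLtil_entry, zero_add]
    rfl
  have h2 : (∑ ρ ∈ Finset.Icc (1 : ℤ) (ℓ : ℤ), aspin N ℓ t ρ x i * cspin N ℓ t ρ x j)
      = Ltot N ℓ t x i j * (1 - Q N ℓ t j ℓ x / Q N ℓ t i 0 x) := by
    rw [key, hgl, hg0]
    ring
  refine ⟨?_, h2⟩
  rw [h2]
  field_simp

end SpinRSK
end
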